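/- arXiv:2410.08846 — 7 statements merged into one kernel-verified Lean document; each statement's English description precedes it below -/
import Mathlib

section
/- Let g, h be smooth compactly supported functions on ℝ^d × ℝ^d. Then ∫ g · L_H h dμ = ∫ h · (−v·∇_x g + ∇U₀·∇_v g) dμ + ∫ g h (v·∇U₁) dμ, where L_H h(x,v) = v·∇_x h(x,v) − ∇U₀(x)·∇_v h(x,v). -/
open MeasureTheory ProbabilityTheory Real

noncomputable section

/-- Phase space `ℝ^d × ℝ^d` (positions and velocities). -/
abbrev Phase (d : ℕ) := (Fin d → ℝ) × (Fin d → ℝ)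

/-- Partial derivative in the position variable `x_i`. -/
def pdx {d : ℕ} (i : Fin d) (f : Phase d → ℝ) (p : Phase d) : ℝ :=
  fderiv ℝ f p (Pi.single i 1, 0)

/-- Partial derivative in the velocity variable `v_i`. -/
def pdv {d : ℕ} (i : Fin d) (f : Phase d → ℝ) (p : Phase d) : ℝ :=
  fderiv ℝ f p (0, Pi.single i 1)

/-- Partial derivative `∂_i U` of a function of the position only. -/
def pd {d : ℕ} (i : Fin d) (U : (Fin d → ℝ) → ℝ) (x : Fin d → ℝ) : ℝ :=
  fderiv ℝ U x (Pi.single i 1)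

/-- Hamiltonian part: `L_H f = v·∇_x f − ∇U₀·∇_v f`. -/
def LH {d : ℕ} (U₀ : (Fin d → ℝ) → ℝ) (f : Phase d → ℝ) (p : Phase d) : ℝ :=
  (∑ i, p.2 i * pdx i f p) - ∑ i, pd i U₀ p.1 * pdv i f p

/-- Ornstein–Uhlenbeck part: `L_D f = −γ v·∇_v f + γ Δ_v f`. -/
def LD {d : ℕ} (γ : ℝ) (f : Phase d → ℝ) (p : Phase d) : ℝ :=
  -γ * (∑ i, p.2 i * pdv i f p) + γ * ∑ i, pdv i (pdv i f) p

/-- Post-jump velocity `Vⁱ`: coordinate `i` is replaced by `ρ v_i + √(1−ρ²) ξ`. -/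
def jumpV {d : ℕ} (ρ : ℝ) (v : Fin d → ℝ) (i : Fin d) (ξ : ℝ) : Fin d → ℝ :=
  Function.update v i (ρ * v i + Real.sqrt (1 - ρ ^ 2) * ξ)

/-- Jump part of the generator:
`L_J f(x,v) = (2/(1−ρ)) Σᵢ E[(f(x,Vⁱ) − f(x,v)) Ψ((∂ᵢU₁(x)/2)(vᵢ − Vⁱᵢ))]`. -/
def LJ {d : ℕ} (ρ : ℝ) (Ψ : ℝ → ℝ) (U₁ : (Fin d → ℝ) → ℝ) (f : Phase d → ℝ) (p : Phase d) : ℝ :=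
  (2 / (1 - ρ)) * ∑ i, ∫ ξ, (f (p.1, jumpV ρ p.2 i ξ) - f p)
      * Ψ (pd i U₁ p.1 / 2 * (p.2 i - (ρ * p.2 i + Real.sqrt (1 - ρ ^ 2) * ξ)))
      ∂(gaussianReal 0 1)

/-- Gibbs measure on phase space, with density `Z⁻¹ exp(−U(x) − |v|²/2)`. -/
def gibbs (d : ℕ) (U : (Fin d → ℝ) → ℝ) (Z : ℝ) : Measure (Phase d) :=
  (volume : Measure (Phase d)).withDensity fun p =>
    ENNReal.ofReal (Z⁻¹ * Real.exp (-U p.1 - (∑ i, p.2 i ^ 2) / 2))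

namespace HamAux
variable {d : ℕ}

instance haarPhase : (volume : Measure (Phase d)).IsAddHaarMeasure := by
  have : (volume : Measure (Phase d))
      = ((volume : Measure (Fin d → ℝ)).prod (volume : Measure (Fin d → ℝ))) := rfl
  rw [this]; exact Measure.prod.instIsAddHaarMeasure _ _

def φf (U₀ U₁ : (Fin d → ℝ) → ℝ) (p : Phase d) : ℝ :=
  -(U₀ p.1 + U₁ p.1) - (∑ i, p.2 i ^ 2) / 2

def Ef (U₀ U₁ : (Fin d → ℝ) → ℝ) (p : Phase d) : ℝ := Real.exp (φf U₀ U₁ p)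

variable {U₀ U₁ : (Fin d → ℝ) → ℝ}

lemma contDiff_φ (hU₀ : ContDiff ℝ (⊤ : ℕ∞) U₀) (hU₁ : ContDiff ℝ (⊤ : ℕ∞) U₁) :
    ContDiff ℝ (⊤ : ℕ∞) (φf U₀ U₁ : Phase d → ℝ) := by
  unfold φf
  have hs : ContDiff ℝ ((⊤ : ℕ∞) : WithTop ℕ∞) (fun p : Phase d => ∑ i, p.2 i ^ 2) :=
    ContDiff.sum fun i _ => (contDiff_pi.1 contDiff_snd i).pow 2
  exact (((hU₀.comp contDiff_fst).add (hU₁.comp contDiff_fst)).neg).sub (hs.div_const 2)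

lemma contDiff_E (hU₀ : ContDiff ℝ (⊤ : ℕ∞) U₀) (hU₁ : ContDiff ℝ (⊤ : ℕ∞) U₁) :
    ContDiff ℝ (⊤ : ℕ∞) (Ef U₀ U₁ : Phase d → ℝ) :=
  Real.contDiff_exp.comp (contDiff_φ hU₀ hU₁)

lemma contDeriv {f : Phase d → ℝ} (hf : ContDiff ℝ (⊤ : ℕ∞) f) (w : Phase d) :
    Continuous fun p => fderiv ℝ f p w :=
  (ContinuousLinearMap.apply ℝ ℝ w).continuous.comp
    (hf.fderiv_right (m := 0) (mod_cast le_top)).continuous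

lemma diffOf {X : Type*} [NormedAddCommGroup X] [NormedSpace ℝ X] {f : X → ℝ}
    (hf : ContDiff ℝ (⊤ : ℕ∞) f) : Differentiable ℝ f :=
  hf.differentiable (by simp)

section fderivφ
variable (hU₀ : ContDiff ℝ (⊤ : ℕ∞) U₀) (hU₁ : ContDiff ℝ (⊤ : ℕ∞) U₁)
include hU₀ hU₁

lemma hasFDerivAt_φ (p : Phase d) :
    HasFDerivAt (φf U₀ U₁)
      ((-(((fderiv ℝ U₀ p.1).comp (ContinuousLinearMap.fst ℝ (Fin d → ℝ) (Fin d → ℝ)))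
          + ((fderiv ℝ U₁ p.1).comp (ContinuousLinearMap.fst ℝ (Fin d → ℝ) (Fin d → ℝ)))))
        - (1/(2:ℝ)) • ((∑ i, (2 * p.2 i) • (ContinuousLinearMap.proj i :
            (Fin d → ℝ) →L[ℝ] ℝ)).comp (ContinuousLinearMap.snd ℝ (Fin d → ℝ) (Fin d → ℝ)))) p := by
  have h1 : HasFDerivAt (U₀ ∘ Prod.fst)
      ((fderiv ℝ U₀ p.1).comp (ContinuousLinearMap.fst ℝ (Fin d → ℝ) (Fin d → ℝ))) p :=
    ((diffOf hU₀ p.1).hasFDerivAt).comp p hasFDerivAt_fst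
  have h2 : HasFDerivAt (U₁ ∘ Prod.fst)
      ((fderiv ℝ U₁ p.1).comp (ContinuousLinearMap.fst ℝ (Fin d → ℝ) (Fin d → ℝ))) p :=
    ((diffOf hU₁ p.1).hasFDerivAt).comp p hasFDerivAt_fst
  have hS : HasFDerivAt (fun v : Fin d → ℝ => ∑ i, v i ^ 2)
      (∑ i, (2 * p.2 i) • (ContinuousLinearMap.proj i : (Fin d → ℝ) →L[ℝ] ℝ)) p.2 := by
    apply HasFDerivAt.fun_sum
    intro i _
    have hmul := (hasFDerivAt_apply (𝕜 := ℝ) i p.2).fun_mul (hasFDerivAt_apply (𝕜 := ℝ) i p.2)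
    have e : (fun v : Fin d → ℝ => v i ^ 2) = fun v => v i * v i := by funext v; ring
    rw [e]
    rw [two_mul, add_smul]
    exact hmul
  have h3 : HasFDerivAt (fun p : Phase d => (∑ i, p.2 i ^ 2) / 2)
      ((1/(2:ℝ)) • ((∑ i, (2 * p.2 i) • (ContinuousLinearMap.proj i :
          (Fin d → ℝ) →L[ℝ] ℝ)).comp (ContinuousLinearMap.snd ℝ (Fin d → ℝ) (Fin d → ℝ)))) p := by
    have h4 := (hS.comp p hasFDerivAt_snd).const_mul (1/(2:ℝ))
    have e : (fun p : Phase d => (∑ i, p.2 i ^ 2) / 2)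
        = fun p : Phase d => (1/(2:ℝ)) * ((fun v : Fin d → ℝ => ∑ i, v i ^ 2) ∘ Prod.snd) p := by
      funext p; simp [Function.comp]; ring
    rw [e]
    exact h4
  exact ((h1.add h2).neg).sub h3

lemma fderiv_φ_x (p : Phase d) (i : Fin d) :
    fderiv ℝ (φf U₀ U₁) p (Pi.single i 1, (0 : Fin d → ℝ)) = -(pd i U₀ p.1 + pd i U₁ p.1) := by
  rw [(hasFDerivAt_φ hU₀ hU₁ p).fderiv]
  simp [pd]

lemma fderiv_φ_v (p : Phase d) (i : Fin d) :
    fderiv ℝ (φf U₀ U₁) p ((0 : Fin d → ℝ), Pi.single i 1) = -(p.2 i) := by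
  rw [(hasFDerivAt_φ hU₀ hU₁ p).fderiv]
  simp [ContinuousLinearMap.sum_apply, Pi.single_apply, mul_ite, Finset.sum_ite_eq']

lemma fderiv_E_apply (p w : Phase d) :
    fderiv ℝ (Ef U₀ U₁) p w = Ef U₀ U₁ p * fderiv ℝ (φf U₀ U₁) p w := by
  have h : HasFDerivAt (Ef U₀ U₁)
      (Real.exp (φf U₀ U₁ p) • fderiv ℝ (φf U₀ U₁) p) p :=
    (((contDiff_φ hU₀ hU₁).differentiable (by simp) p).hasFDerivAt).exp
  rw [h.fderiv]
  simp [Ef]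

end fderivφ
lemma mulCS_r {α : Type*} [TopologicalSpace α] {f g : α → ℝ} (hf : HasCompactSupport f) :
    HasCompactSupport fun x => f x * g x := hf.mul_right

lemma mulCS_l {α : Type*} [TopologicalSpace α] {f g : α → ℝ} (hg : HasCompactSupport g) :
    HasCompactSupport fun x => f x * g x := hg.mul_left

section ibp
variable (hU₀ : ContDiff ℝ (⊤ : ℕ∞) U₀) (hU₁ : ContDiff ℝ (⊤ : ℕ∞) U₁)
include hU₀ hU₁

lemma ibp (A : Phase d → ℝ) (hA : ContDiff ℝ (⊤ : ℕ∞) A) (hAs : HasCompactSupport A)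
    (w : Phase d) :
    ∫ p, A p * fderiv ℝ (Ef U₀ U₁) p w = - ∫ p, fderiv ℝ A p w * Ef U₀ U₁ p := by
  have hEc : Continuous (Ef U₀ U₁ : Phase d → ℝ) := (contDiff_E hU₀ hU₁).continuous
  have hDA : HasCompactSupport fun p : Phase d => fderiv ℝ A p w := hAs.fderiv_apply ℝ w
  apply integral_mul_fderiv_eq_neg_fderiv_mul_of_integrable
  · exact ((contDeriv hA w).mul hEc).integrable_of_hasCompactSupport (mulCS_r hDA)
  · exact (hA.continuous.mul (contDeriv (contDiff_E hU₀ hU₁) w)).integrable_of_hasCompactSupport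
      (mulCS_r hAs)
  · exact (hA.continuous.mul hEc).integrable_of_hasCompactSupport (mulCS_r hAs)
  · exact fun x _ => diffOf hA x
  · exact fun x _ => diffOf (contDiff_E hU₀ hU₁) x

lemma key {g h c : Phase d → ℝ}
    (hgC : ContDiff ℝ (⊤ : ℕ∞) g) (hgs : HasCompactSupport g)
    (hhC : ContDiff ℝ (⊤ : ℕ∞) h) (hhs : HasCompactSupport h)
    (hcC : ContDiff ℝ (⊤ : ℕ∞) c) (w : Phase d)
    (hcw : ∀ p, fderiv ℝ c p w = 0) :
    ∫ p, Ef U₀ U₁ p * (c p * (g p * fderiv ℝ h p w))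
      = -(∫ p, Ef U₀ U₁ p * (c p * (fderiv ℝ g p w * h p)))
        - ∫ p, Ef U₀ U₁ p * (c p * (g p * h p)) * fderiv ℝ (φf U₀ U₁) p w := by
  have hEc : Continuous (Ef U₀ U₁ : Phase d → ℝ) := (contDiff_E hU₀ hU₁).continuous
  have hA : ContDiff ℝ (⊤ : ℕ∞) (fun p : Phase d => c p * (g p * h p)) :=
    hcC.mul (hgC.mul hhC)
  have hAs : HasCompactSupport (fun p : Phase d => c p * (g p * h p)) :=
    mulCS_l (mulCS_r hgs)
  have hDA : ∀ p, fderiv ℝ (fun p : Phase d => c p * (g p * h p)) p w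
      = c p * (fderiv ℝ g p w * h p) + c p * (g p * fderiv ℝ h p w) := by
    intro p
    have Hc := (diffOf hcC p).hasFDerivAt
    have Hg := (diffOf hgC p).hasFDerivAt
    have Hh := (diffOf hhC p).hasFDerivAt
    rw [(Hc.fun_mul (Hg.fun_mul Hh)).fderiv]
    simp [hcw p]
    ring
  have hM := ibp hU₀ hU₁ (fun p => c p * (g p * h p)) hA hAs w
  simp only [fderiv_E_apply hU₀ hU₁, hDA] at hM
  have i1 : Integrable (fun p : Phase d => (c p * (fderiv ℝ g p w * h p)) * Ef U₀ U₁ p)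
      volume :=
    ((hcC.continuous.mul ((contDeriv hgC w).mul hhC.continuous)).mul
      hEc).integrable_of_hasCompactSupport (mulCS_r (mulCS_l (mulCS_l hhs)))
  have i2 : Integrable (fun p : Phase d => (c p * (g p * fderiv ℝ h p w)) * Ef U₀ U₁ p)
      volume :=
    ((hcC.continuous.mul (hgC.continuous.mul (contDeriv hhC w))).mul
      hEc).integrable_of_hasCompactSupport (mulCS_r (mulCS_l (mulCS_r hgs)))
  rw [show (fun p : Phase d =>
        (c p * (fderiv ℝ g p w * h p) + c p * (g p * fderiv ℝ h p w)) * Ef U₀ U₁ p)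
      = fun p : Phase d => (c p * (fderiv ℝ g p w * h p)) * Ef U₀ U₁ p
          + (c p * (g p * fderiv ℝ h p w)) * Ef U₀ U₁ p from funext fun p => by ring] at hM
  rw [integral_add i1 i2] at hM
  have e1 : (fun p : Phase d => Ef U₀ U₁ p * (c p * (g p * fderiv ℝ h p w)))
      = fun p : Phase d => (c p * (g p * fderiv ℝ h p w)) * Ef U₀ U₁ p :=
    funext fun p => mul_comm _ _
  have e2 : (fun p : Phase d => Ef U₀ U₁ p * (c p * (fderiv ℝ g p w * h p)))
      = fun p : Phase d => (c p * (fderiv ℝ g p w * h p)) * Ef U₀ U₁ p :=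
    funext fun p => mul_comm _ _
  have e3 : (fun p : Phase d => Ef U₀ U₁ p * (c p * (g p * h p)) * fderiv ℝ (φf U₀ U₁) p w)
      = fun p : Phase d => (c p * (g p * h p)) * (Ef U₀ U₁ p * fderiv ℝ (φf U₀ U₁) p w) :=
    funext fun p => by ring
  rw [e1, e2, e3]
  linarith [hM]

end ibp

section gibbsint
variable (hU₀ : ContDiff ℝ (⊤ : ℕ∞) U₀) (hU₁ : ContDiff ℝ (⊤ : ℕ∞) U₁)
include hU₀ hU₁

lemma gibbs_integral {Z : ℝ} (hZ : 0 ≤ Z) (f : Phase d → ℝ) :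
    ∫ p, f p ∂(gibbs d (fun x => U₀ x + U₁ x) Z) = Z⁻¹ * ∫ p, Ef U₀ U₁ p * f p := by
  have hd : Measurable fun p : Phase d => (Z⁻¹ * Ef U₀ U₁ p).toNNReal :=
    (measurable_const.mul (contDiff_E hU₀ hU₁).continuous.measurable).real_toNNReal
  have e : gibbs d (fun x => U₀ x + U₁ x) Z
      = (volume : Measure (Phase d)).withDensity
          fun p => (((Z⁻¹ * Ef U₀ U₁ p).toNNReal : NNReal) : ENNReal) := rfl
  rw [e, integral_withDensity_eq_integral_smul hd f]
  have e2 : (fun p : Phase d => (Z⁻¹ * Ef U₀ U₁ p).toNNReal • f p)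
      = fun p => Z⁻¹ * (Ef U₀ U₁ p * f p) := by
    funext p
    rw [NNReal.smul_def, Real.coe_toNNReal _ (mul_nonneg (inv_nonneg.2 hZ) (le_of_lt (show (0:ℝ) < Ef U₀ U₁ p from Real.exp_pos _)))]
    rw [smul_eq_mul, mul_assoc]
  rw [e2, integral_const_mul]

end gibbsint

end HamAux

/-- Integration by parts for the Hamiltonian part of the generator:
`∫ g L_H h dμ = ∫ h (−v·∇_x g + ∇U₀·∇_v g) dμ + ∫ g h (v·∇U₁) dμ`. -/
theorem hamiltonian_adjoint {d : ℕ}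
    (U₀ U₁ : (Fin d → ℝ) → ℝ)
    (hU₀ : ContDiff ℝ (⊤ : ℕ∞) U₀) (hU₁ : ContDiff ℝ (⊤ : ℕ∞) U₁)
    (hint : Integrable (fun x : Fin d → ℝ => Real.exp (-(U₀ x + U₁ x))))
    (Z : ℝ)
    (hZ : Z = ∫ p : Phase d, Real.exp (-(U₀ p.1 + U₁ p.1) - (∑ i, p.2 i ^ 2) / 2))
    (μ : Measure (Phase d)) (hμ : μ = gibbs d (fun x => U₀ x + U₁ x) Z)
    (g h : Phase d → ℝ)
    (hg : ContDiff ℝ (⊤ : ℕ∞) g) (hgs : HasCompactSupport g)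
    (hh : ContDiff ℝ (⊤ : ℕ∞) h) (hhs : HasCompactSupport h) :
    ∫ p, g p * LH U₀ h p ∂μ
      = (∫ p, h p * (-(∑ i, p.2 i * pdx i g p) + ∑ i, pd i U₀ p.1 * pdv i g p) ∂μ)
        + ∫ p, g p * h p * (∑ i, p.2 i * pd i U₁ p.1) ∂μ := by
  classical
  open HamAux in
  subst hμ
  have hZ0 : 0 ≤ Z := by
    rw [hZ]; exact integral_nonneg fun p => (Real.exp_pos _).le
  rw [HamAux.gibbs_integral hU₀ hU₁ hZ0, HamAux.gibbs_integral hU₀ hU₁ hZ0,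
      HamAux.gibbs_integral hU₀ hU₁ hZ0, ← mul_add]
  congr 1
  have hEc : Continuous (Ef U₀ U₁ : Phase d → ℝ) := (contDiff_E hU₀ hU₁).continuous
  have hgc := hg.continuous
  have hhc := hh.continuous
  have intH : ∀ F : Phase d → ℝ, Continuous F → (∀ p : Phase d, g p = 0 → h p = 0 → F p = 0) →
      Integrable F (volume : Measure (Phase d)) := by
    intro F hF hF0
    apply hF.integrable_of_hasCompactSupport
    apply HasCompactSupport.intro (hgs.union hhs)
    intro p hp
    rw [Set.mem_union] at hp
    push_neg at hp
    exact hF0 p (image_eq_zero_of_notMem_tsupport hp.1) (image_eq_zero_of_notMem_tsupport hp.2)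
  have cv : ∀ i : Fin d, Continuous fun p : Phase d => p.2 i :=
    fun i => (continuous_apply i).comp continuous_snd
  have hcvC : ∀ i : Fin d, ContDiff ℝ (⊤ : ℕ∞) fun p : Phase d => p.2 i :=
    fun i => contDiff_pi.1 contDiff_snd i
  have hpdC : ∀ (U : (Fin d → ℝ) → ℝ), ContDiff ℝ (⊤ : ℕ∞) U →
      ∀ i : Fin d, ContDiff ℝ (⊤ : ℕ∞) fun p : Phase d => pd i U p.1 := by
    intro U hU i
    have h1 : ContDiff ℝ ((⊤ : ℕ∞) : WithTop ℕ∞) (fderiv ℝ U) :=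
      hU.fderiv_right (le_of_eq ENat.coe_top_add_one)
    have h2 : ContDiff ℝ (⊤ : ℕ∞) (pd i U) := h1.clm_apply contDiff_const
    exact h2.comp contDiff_fst
  have cpd0 : ∀ i : Fin d, Continuous fun p : Phase d => pd i U₀ p.1 :=
    fun i => (hpdC U₀ hU₀ i).continuous
  have cpd1 : ∀ i : Fin d, Continuous fun p : Phase d => pd i U₁ p.1 :=
    fun i => (hpdC U₁ hU₁ i).continuous
  have cDg : ∀ w : Phase d, Continuous fun p => fderiv ℝ g p w := contDeriv hg
  have cDh : ∀ w : Phase d, Continuous fun p => fderiv ℝ h p w := contDeriv hh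
  -- the two families of per-coordinate integration-by-parts identities
  have dcv : ∀ (i : Fin d) (p : Phase d),
      fderiv ℝ (fun p : Phase d => p.2 i) p (Pi.single i 1, (0 : Fin d → ℝ)) = 0 := by
    intro i p
    have H : HasFDerivAt (fun p : Phase d => p.2 i)
        ((ContinuousLinearMap.proj (R := ℝ) (φ := fun _ : Fin d => ℝ) i).comp
          (ContinuousLinearMap.snd ℝ (Fin d → ℝ) (Fin d → ℝ))) p :=
      (hasFDerivAt_apply (𝕜 := ℝ) i p.2).comp p hasFDerivAt_snd
    rw [H.fderiv]
    simp
  have dpd0 : ∀ (i : Fin d) (p : Phase d),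
      fderiv ℝ (fun p : Phase d => pd i U₀ p.1) p ((0 : Fin d → ℝ), Pi.single i 1) = 0 := by
    intro i p
    have hD : ContDiff ℝ ((⊤ : ℕ∞) : WithTop ℕ∞) (pd i U₀) :=
      (hU₀.fderiv_right (le_of_eq ENat.coe_top_add_one)).clm_apply contDiff_const
    have H : HasFDerivAt (fun p : Phase d => pd i U₀ p.1)
        ((fderiv ℝ (pd i U₀) p.1).comp (ContinuousLinearMap.fst ℝ (Fin d → ℝ) (Fin d → ℝ))) p :=
      ((diffOf hD p.1).hasFDerivAt).comp p hasFDerivAt_fst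
    rw [H.fderiv]
    simp
  have Hx : ∀ i : Fin d, (∫ p : Phase d, Ef U₀ U₁ p * (p.2 i * (g p * fderiv ℝ h p (Pi.single i 1, (0 : Fin d → ℝ)))))
      = -(∫ p : Phase d, Ef U₀ U₁ p * (p.2 i * (fderiv ℝ g p (Pi.single i 1, (0 : Fin d → ℝ)) * h p)))
        + ((∫ p : Phase d, Ef U₀ U₁ p * (g p * h p * (p.2 i * pd i U₀ p.1)))
          + (∫ p : Phase d, Ef U₀ U₁ p * (g p * h p * (p.2 i * pd i U₁ p.1)))) := by
    intro i
    have K := key hU₀ hU₁ hg hgs hh hhs (hcvC i) (Pi.single i 1, (0 : Fin d → ℝ)) (dcv i)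
    simp only [fderiv_φ_x hU₀ hU₁] at K
    have iC0 : Integrable (fun p : Phase d => Ef U₀ U₁ p * (g p * h p * (p.2 i * pd i U₀ p.1)))
        (volume : Measure (Phase d)) :=
      intH _ (hEc.mul ((hgc.mul hhc).mul ((cv i).mul (cpd0 i)))) (fun p h1 _ => by simp [h1])
    have iC1 : Integrable (fun p : Phase d => Ef U₀ U₁ p * (g p * h p * (p.2 i * pd i U₁ p.1)))
        (volume : Measure (Phase d)) :=
      intH _ (hEc.mul ((hgc.mul hhc).mul ((cv i).mul (cpd1 i)))) (fun p h1 _ => by simp [h1])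
    rw [show (fun p : Phase d => Ef U₀ U₁ p * (p.2 i * (g p * h p)) * -(pd i U₀ p.1 + pd i U₁ p.1))
        = fun p : Phase d => -(Ef U₀ U₁ p * (g p * h p * (p.2 i * pd i U₀ p.1))
            + Ef U₀ U₁ p * (g p * h p * (p.2 i * pd i U₁ p.1))) from funext fun p => by ring] at K
    rw [integral_neg, integral_add iC0 iC1] at K
    linarith [K]
  have Hv : ∀ i : Fin d, (∫ p : Phase d, Ef U₀ U₁ p * (pd i U₀ p.1 * (g p * fderiv ℝ h p ((0 : Fin d → ℝ), Pi.single i 1))))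
      = -(∫ p : Phase d, Ef U₀ U₁ p * (pd i U₀ p.1 * (fderiv ℝ g p ((0 : Fin d → ℝ), Pi.single i 1) * h p)))
        + (∫ p : Phase d, Ef U₀ U₁ p * (g p * h p * (p.2 i * pd i U₀ p.1))) := by
    intro i
    have K := key hU₀ hU₁ hg hgs hh hhs (hpdC U₀ hU₀ i) ((0 : Fin d → ℝ), Pi.single i 1) (dpd0 i)
    simp only [fderiv_φ_v hU₀ hU₁] at K
    have iC0 : Integrable (fun p : Phase d => Ef U₀ U₁ p * (g p * h p * (p.2 i * pd i U₀ p.1)))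
        (volume : Measure (Phase d)) :=
      intH _ (hEc.mul ((hgc.mul hhc).mul ((cv i).mul (cpd0 i)))) (fun p h1 _ => by simp [h1])
    rw [show (fun p : Phase d => Ef U₀ U₁ p * (pd i U₀ p.1 * (g p * h p)) * -p.2 i)
        = fun p : Phase d => -(Ef U₀ U₁ p * (g p * h p * (p.2 i * pd i U₀ p.1)))
        from funext fun p => by ring] at K
    rw [integral_neg] at K
    linarith [K]
  -- expand the three integrands into per-coordinate sums
  have eL : (fun p : Phase d => Ef U₀ U₁ p * (g p * LH U₀ h p))
      = fun p : Phase d =>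
          (∑ i, Ef U₀ U₁ p * (p.2 i * (g p * fderiv ℝ h p (Pi.single i 1, (0 : Fin d → ℝ)))))
          - ∑ i, Ef U₀ U₁ p * (pd i U₀ p.1 * (g p * fderiv ℝ h p ((0 : Fin d → ℝ), Pi.single i 1))) := by
    funext p
    simp only [LH, pdx, pdv, mul_sub, Finset.mul_sum]
    congr 1 <;> exact Finset.sum_congr rfl fun i _ => by ring
  have eR : (fun p : Phase d => Ef U₀ U₁ p * (h p * (-(∑ i, p.2 i * pdx i g p) + ∑ i, pd i U₀ p.1 * pdv i g p)))
      = fun p : Phase d =>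
          (∑ i, Ef U₀ U₁ p * (pd i U₀ p.1 * (fderiv ℝ g p ((0 : Fin d → ℝ), Pi.single i 1) * h p)))
          - ∑ i, Ef U₀ U₁ p * (p.2 i * (fderiv ℝ g p (Pi.single i 1, (0 : Fin d → ℝ)) * h p)) := by
    funext p
    rw [show (∑ i, Ef U₀ U₁ p * (pd i U₀ p.1 * (fderiv ℝ g p ((0 : Fin d → ℝ), Pi.single i 1) * h p)))
        = ∑ i, Ef U₀ U₁ p * h p * (pd i U₀ p.1 * pdv i g p) from
        Finset.sum_congr rfl fun i _ => by simp only [pdv]; ring,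
      show (∑ i, Ef U₀ U₁ p * (p.2 i * (fderiv ℝ g p (Pi.single i 1, (0 : Fin d → ℝ)) * h p)))
        = ∑ i, Ef U₀ U₁ p * h p * (p.2 i * pdx i g p) from
        Finset.sum_congr rfl fun i _ => by simp only [pdx]; ring,
      ← Finset.mul_sum, ← Finset.mul_sum]
    ring
  have eJ : (fun p : Phase d => Ef U₀ U₁ p * (g p * h p * (∑ i, p.2 i * pd i U₁ p.1)))
      = fun p : Phase d => ∑ i, Ef U₀ U₁ p * (g p * h p * (p.2 i * pd i U₁ p.1)) := by
    funext p
    simp only [Finset.mul_sum]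
  have iLA : ∀ i : Fin d, Integrable
      (fun p : Phase d => Ef U₀ U₁ p * (p.2 i * (g p * fderiv ℝ h p (Pi.single i 1, (0 : Fin d → ℝ)))))
      (volume : Measure (Phase d)) :=
    fun i => intH _ (hEc.mul ((cv i).mul (hgc.mul (cDh _)))) (fun p h1 _ => by simp [h1])
  have iLB : ∀ i : Fin d, Integrable
      (fun p : Phase d => Ef U₀ U₁ p * (pd i U₀ p.1 * (g p * fderiv ℝ h p ((0 : Fin d → ℝ), Pi.single i 1))))
      (volume : Measure (Phase d)) :=
    fun i => intH _ (hEc.mul ((cpd0 i).mul (hgc.mul (cDh _)))) (fun p h1 _ => by simp [h1])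
  have iA : ∀ i : Fin d, Integrable
      (fun p : Phase d => Ef U₀ U₁ p * (p.2 i * (fderiv ℝ g p (Pi.single i 1, (0 : Fin d → ℝ)) * h p)))
      (volume : Measure (Phase d)) :=
    fun i => intH _ (hEc.mul ((cv i).mul ((cDg _).mul hhc))) (fun p _ h2 => by simp [h2])
  have iB : ∀ i : Fin d, Integrable
      (fun p : Phase d => Ef U₀ U₁ p * (pd i U₀ p.1 * (fderiv ℝ g p ((0 : Fin d → ℝ), Pi.single i 1) * h p)))
      (volume : Measure (Phase d)) :=
    fun i => intH _ (hEc.mul ((cpd0 i).mul ((cDg _).mul hhc))) (fun p _ h2 => by simp [h2])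
  have iC1 : ∀ i : Fin d, Integrable
      (fun p : Phase d => Ef U₀ U₁ p * (g p * h p * (p.2 i * pd i U₁ p.1)))
      (volume : Measure (Phase d)) :=
    fun i => intH _ (hEc.mul ((hgc.mul hhc).mul ((cv i).mul (cpd1 i)))) (fun p h1 _ => by simp [h1])
  rw [eL, eR, eJ]
  rw [integral_sub (integrable_finset_sum _ fun i _ => iLA i) (integrable_finset_sum _ fun i _ => iLB i),
      integral_sub (integrable_finset_sum _ fun i _ => iB i) (integrable_finset_sum _ fun i _ => iA i),
      integral_finset_sum _ (fun i _ => iLA i), integral_finset_sum _ (fun i _ => iLB i),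
      integral_finset_sum _ (fun i _ => iB i), integral_finset_sum _ (fun i _ => iA i),
      integral_finset_sum _ (fun i _ => iC1 i)]
  rw [Finset.sum_congr rfl (fun i _ => Hx i), Finset.sum_congr rfl (fun i _ => Hv i)]
  simp only [Finset.sum_add_distrib, Finset.sum_neg_distrib]
  ring
end
end

section
/- For every n ∈ ℕ with n ≥ 1 there exists a constant C > 0 such that for every smooth compactly supported function h : ℝ → ℝ, ∫_ℝ v^{2n} h(v)² e^{−v²/2} dv ≤ C Σ_{k=0}^{n} ∫_ℝ (h^{(k)}(v))² e^{−v²/2} dv, where h^{(k)} denotes the k-th derivative of h. -/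
open MeasureTheory Real Filter Function

noncomputable section

namespace GMB

def w (v : ℝ) : ℝ := Real.exp (-v ^ 2 / 2)

lemma w_cont : Continuous w := by unfold w; continuity

lemma w_nonneg (v : ℝ) : 0 ≤ w v := (Real.exp_pos _).le

lemma w_hasDeriv (v : ℝ) : HasDerivAt w (-v * w v) v := by
  have h1 : HasDerivAt (fun v : ℝ => -v ^ 2 / 2) (-v) v := by
    have h := ((hasDerivAt_pow 2 v).neg.div_const 2)
    refine h.congr_deriv ?_
    simp; ring
  have := h1.exp
  unfold w
  simpa [mul_comm] using this

lemma integrable_w {f : ℝ → ℝ} (hf : Continuous f) (hs : HasCompactSupport f) :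
    Integrable (fun v => f v * w v) :=
  (hf.mul w_cont).integrable_of_hasCompactSupport hs.mul_right

lemma tendsto_zero {f : ℝ → ℝ} (hs : HasCompactSupport f) :
    Tendsto (fun v => f v * w v) atTop (nhds 0) ∧
    Tendsto (fun v => f v * w v) atBot (nhds 0) := by
  have h : HasCompactSupport (fun v => f v * w v) := hs.mul_right
  have h0 : Tendsto (fun v => f v * w v) (cocompact ℝ) (nhds 0) := h.is_zero_at_infty
  rw [cocompact_eq_atBot_atTop] at h0
  exact ⟨h0.mono_left le_sup_right, h0.mono_left le_sup_left⟩

/-- Integration by parts against the Gaussian weight. -/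
lemma ibp {f : ℝ → ℝ} (hf : ContDiff ℝ (⊤ : ℕ∞) f) (hs : HasCompactSupport f) :
    ∫ v : ℝ, deriv f v * w v = ∫ v : ℝ, v * f v * w v := by
  have h1 : Integrable (fun v => deriv f v * w v) :=
    integrable_w (hf.continuous_deriv (by exact_mod_cast le_top)) hs.deriv
  have h2 : Integrable (fun v => v * f v * w v) := by
    have : Integrable (fun v => (v * f v) * w v) :=
      integrable_w (continuous_id.mul hf.continuous) hs.mul_left
    simpa using this
  have hd : ∀ v : ℝ, HasDerivAt (fun v => f v * w v)
      (deriv f v * w v - v * f v * w v) v := by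
    intro v
    have h1' : HasDerivAt f (deriv f v) v := (hf.differentiable (by simp) v).hasDerivAt
    have := h1'.mul (w_hasDeriv v)
    refine this.congr_deriv ?_
    ring
  have hint : Integrable (fun v => deriv f v * w v - v * f v * w v) := h1.sub h2
  have hT := tendsto_zero hs
  have hz : ∫ v : ℝ, (deriv f v * w v - v * f v * w v) = 0 - 0 :=
    integral_of_hasDerivAt_of_tendsto hd hint hT.2 hT.1
  rw [integral_sub h1 h2] at hz
  linarith

lemma hcs_sq {g : ℝ → ℝ} (hs : HasCompactSupport g) :
    HasCompactSupport (fun v => g v ^ 2) := by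
  have : HasCompactSupport (g * g) := hs.mul_right
  simpa [pow_two, Pi.mul_def] using this

/-- Core one-step estimate. -/
lemma core {g : ℝ → ℝ} (hg : ContDiff ℝ (⊤ : ℕ∞) g) (hs : HasCompactSupport g) :
    ∫ v : ℝ, v ^ 2 * g v ^ 2 * w v ≤
      2 * (∫ v : ℝ, g v ^ 2 * w v) + 4 * ∫ v : ℝ, deriv g v ^ 2 * w v := by
  set f : ℝ → ℝ := fun v => v * g v ^ 2 with hfdef
  have hgc : Continuous g := hg.continuous
  have hgd : ∀ v, HasDerivAt g (deriv g v) v := fun v => (hg.differentiable (by simp) v).hasDerivAt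
  have hg' : Continuous (deriv g) := hg.continuous_deriv (by exact_mod_cast le_top)
  have hf : ContDiff ℝ (⊤ : ℕ∞) f := contDiff_id.mul (hg.pow 2)
  have hsf : HasCompactSupport f := (hcs_sq hs).mul_left
  have hderiv : ∀ v, deriv f v = g v ^ 2 + 2 * v * g v * deriv g v := by
    intro v
    have : HasDerivAt f (1 * g v ^ 2 + v * (2 * g v ^ 1 * deriv g v)) v :=
      (hasDerivAt_id v).mul ((hgd v).pow 2)
    rw [this.deriv]; ring
  have hibp := ibp hf hsf
  -- rewrite both sides
  have hL : ∫ v : ℝ, deriv f v * w v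
      = ∫ v : ℝ, (g v ^ 2 * w v + 2 * v * g v * deriv g v * w v) := by
    congr 1; funext v; rw [hderiv v]; ring
  have hR : ∫ v : ℝ, v * f v * w v = ∫ v : ℝ, v ^ 2 * g v ^ 2 * w v := by
    congr 1; funext v; simp only [hfdef]; ring
  have i1 : Integrable (fun v => g v ^ 2 * w v) :=
    integrable_w (by continuity) (hcs_sq hs)
  have i2 : Integrable (fun v => 2 * v * g v * deriv g v * w v) := by
    have : Integrable (fun v => (2 * v * g v * deriv g v) * w v) :=
      integrable_w (by continuity) (hs.deriv.mul_left (f := fun v => 2 * v * g v))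
    simpa using this
  have i3 : Integrable (fun v => v ^ 2 * g v ^ 2 * w v) := by
    have : Integrable (fun v => (v ^ 2 * g v ^ 2) * w v) :=
      integrable_w (by continuity) ((hcs_sq hs).mul_left (f := fun v : ℝ => v ^ 2))
    simpa using this
  have i4 : Integrable (fun v => deriv g v ^ 2 * w v) :=
    integrable_w (by continuity) (hcs_sq hs.deriv)
  have hsum : ∫ v : ℝ, v ^ 2 * g v ^ 2 * w v
      = (∫ v : ℝ, g v ^ 2 * w v) + ∫ v : ℝ, 2 * v * g v * deriv g v * w v := by
    rw [← integral_add i1 i2, ← hL, hibp, hR]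
  have hmono : ∫ v : ℝ, 2 * v * g v * deriv g v * w v
      ≤ ∫ v : ℝ, ((1 / 2) * (v ^ 2 * g v ^ 2 * w v) + 2 * (deriv g v ^ 2 * w v)) := by
    apply integral_mono i2 ((i3.const_mul _).add (i4.const_mul _))
    intro v
    have h1 : 2 * v * g v * deriv g v ≤ (1 / 2) * (v ^ 2 * g v ^ 2) + 2 * deriv g v ^ 2 := by
      nlinarith [sq_nonneg (v * g v - 2 * deriv g v)]
    have := mul_le_mul_of_nonneg_right h1 (w_nonneg v)
    calc 2 * v * g v * deriv g v * w v
        ≤ ((1 / 2) * (v ^ 2 * g v ^ 2) + 2 * deriv g v ^ 2) * w v := this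
      _ = (1 / 2) * (v ^ 2 * g v ^ 2 * w v) + 2 * (deriv g v ^ 2 * w v) := by ring
  rw [integral_add (i3.const_mul _) (i4.const_mul _), integral_const_mul, integral_const_mul]
    at hmono
  set X := ∫ (v : ℝ), v ^ 2 * g v ^ 2 * w v with hX
  set A := ∫ (v : ℝ), g v ^ 2 * w v
  set D := ∫ (v : ℝ), deriv g v ^ 2 * w v
  linarith

lemma pow_sub_one_sq_le (n : ℕ) (v : ℝ) : (v ^ (n - 1)) ^ 2 ≤ 1 + (v ^ n) ^ 2 := by
  rw [← sq_abs (v ^ (n - 1)), ← sq_abs (v ^ n)]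
  rcases le_or_gt (|v|) 1 with h | h
  · have h1 : |v ^ (n - 1)| ≤ 1 := by rw [abs_pow]; exact pow_le_one₀ (abs_nonneg v) h
    nlinarith [abs_nonneg (v ^ (n - 1)), sq_nonneg (|v ^ n|)]
  · have h1 : |v ^ (n - 1)| ≤ |v ^ n| := by
      rw [abs_pow, abs_pow]; exact pow_le_pow_right₀ h.le (Nat.sub_le n 1)
    nlinarith [abs_nonneg (v ^ (n - 1)), abs_nonneg (v ^ n)]

lemma main (n : ℕ) :
    ∃ C : ℝ, 0 < C ∧ ∀ h : ℝ → ℝ, ContDiff ℝ (⊤ : ℕ∞) h → HasCompactSupport h →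
      ∫ v : ℝ, v ^ (2 * n) * h v ^ 2 * w v
        ≤ C * ∑ k ∈ Finset.range (n + 1), ∫ v : ℝ, (iteratedDeriv k h v) ^ 2 * w v := by
  induction n with
  | zero =>
    refine ⟨1, one_pos, fun h hh hs => ?_⟩
    simp [iteratedDeriv_zero]
  | succ n ih =>
    obtain ⟨C, hC, hCle⟩ := ih
    refine ⟨2 * C + 8 * (n : ℝ) ^ 2 + 8 * (n : ℝ) ^ 2 * C + 8 * C, by positivity,
      fun h hh hs => ?_⟩
    have hone : (1 : WithTop ℕ∞) ≤ ((⊤ : ℕ∞) : WithTop ℕ∞) := by exact_mod_cast le_top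
    have hhc : Continuous h := hh.continuous
    have hhd : ∀ v, HasDerivAt h (deriv h v) v :=
      fun v => (hh.differentiable (by simp) v).hasDerivAt
    have hh' : ContDiff ℝ (⊤ : ℕ∞) (deriv h) := (contDiff_infty_iff_deriv.mp hh).2
    have hh'c : Continuous (deriv h) := hh'.continuous
    set g : ℝ → ℝ := fun v => v ^ n * h v with hgdef
    have hg : ContDiff ℝ (⊤ : ℕ∞) g := (contDiff_id.pow n).mul hh
    have hsg : HasCompactSupport g := hs.mul_left
    have hgc : Continuous g := hg.continuous
    have hdg : ∀ v, deriv g v = (n : ℝ) * v ^ (n - 1) * h v + v ^ n * deriv h v := by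
      intro v
      have : HasDerivAt g ((n : ℝ) * v ^ (n - 1) * h v + v ^ n * deriv h v) v :=
        (hasDerivAt_pow n v).mul (hhd v)
      exact this.deriv
    -- rewrite LHS
    have step1 : ∫ v : ℝ, v ^ (2 * (n + 1)) * h v ^ 2 * w v
        = ∫ v : ℝ, v ^ 2 * g v ^ 2 * w v := by
      congr 1; funext v; simp only [hgdef]; ring
    have step2 := core hg hsg
    have step3 : ∫ v : ℝ, g v ^ 2 * w v = ∫ v : ℝ, v ^ (2 * n) * h v ^ 2 * w v := by
      congr 1; funext v; simp only [hgdef]; ring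
    -- bound the derivative integral
    have hgc' : Continuous (deriv g) := hg.continuous_deriv (by exact_mod_cast le_top)
    have i_dg : Integrable (fun v => deriv g v ^ 2 * w v) :=
      integrable_w (hgc'.pow 2) (hcs_sq hsg.deriv)
    have iA : Integrable (fun v => h v ^ 2 * w v) := integrable_w (hhc.pow 2) (hcs_sq hs)
    have iB : Integrable (fun v => v ^ (2 * n) * h v ^ 2 * w v) := by
      have : Integrable (fun v => (fun v : ℝ => v ^ (2 * n) * h v ^ 2) v * w v) :=
        integrable_w ((continuous_pow (2 * n)).mul (hhc.pow 2))
          ((hcs_sq hs).mul_left (f := fun v : ℝ => v ^ (2 * n)))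
      simpa using this
    have iC : Integrable (fun v => v ^ (2 * n) * deriv h v ^ 2 * w v) := by
      have : Integrable (fun v => (fun v : ℝ => v ^ (2 * n) * deriv h v ^ 2) v * w v) :=
        integrable_w ((continuous_pow (2 * n)).mul (hh'c.pow 2))
          ((hcs_sq hs.deriv).mul_left (f := fun v : ℝ => v ^ (2 * n)))
      simpa using this
    have hmono : ∫ v : ℝ, deriv g v ^ 2 * w v
        ≤ ∫ v : ℝ, (2 * (n : ℝ) ^ 2 * (h v ^ 2 * w v) +
            (2 * (n : ℝ) ^ 2 * (v ^ (2 * n) * h v ^ 2 * w v) +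
              2 * (v ^ (2 * n) * deriv h v ^ 2 * w v))) := by
      apply integral_mono i_dg ((iA.const_mul _).add ((iB.const_mul _).add (iC.const_mul _)))
      intro v
      have e1 := pow_sub_one_sq_le n v
      have hvpow : v ^ (2 * n) = (v ^ n) ^ 2 := by rw [← pow_mul, mul_comm]
      have key : deriv g v ^ 2 ≤ 2 * (n : ℝ) ^ 2 * h v ^ 2 +
          (2 * (n : ℝ) ^ 2 * ((v ^ n) ^ 2 * h v ^ 2) + 2 * ((v ^ n) ^ 2 * deriv h v ^ 2)) := by
        rw [hdg v]
        nlinarith [sq_nonneg ((n : ℝ) * v ^ (n - 1) * h v - v ^ n * deriv h v),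
          mul_nonneg (mul_nonneg (sq_nonneg (n : ℝ)) (sq_nonneg (h v)))
            (sub_nonneg.mpr e1), sq_nonneg (h v), sq_nonneg (n : ℝ)]
      have := mul_le_mul_of_nonneg_right key (w_nonneg v)
      calc deriv g v ^ 2 * w v
          ≤ (2 * (n : ℝ) ^ 2 * h v ^ 2 +
            (2 * (n : ℝ) ^ 2 * ((v ^ n) ^ 2 * h v ^ 2) +
              2 * ((v ^ n) ^ 2 * deriv h v ^ 2))) * w v := this
        _ = 2 * (n : ℝ) ^ 2 * (h v ^ 2 * w v) +
            (2 * (n : ℝ) ^ 2 * (v ^ (2 * n) * h v ^ 2 * w v) +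
              2 * (v ^ (2 * n) * deriv h v ^ 2 * w v)) := by rw [hvpow]; ring
    have hmono' : ∫ v : ℝ, deriv g v ^ 2 * w v
        ≤ 2 * (n : ℝ) ^ 2 * (∫ v : ℝ, h v ^ 2 * w v) +
          (2 * (n : ℝ) ^ 2 * (∫ v : ℝ, v ^ (2 * n) * h v ^ 2 * w v) +
            2 * (∫ v : ℝ, v ^ (2 * n) * deriv h v ^ 2 * w v)) := by
      refine hmono.trans_eq ?_
      have iBC : Integrable (fun v => 2 * (n : ℝ) ^ 2 * (v ^ (2 * n) * h v ^ 2 * w v) +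
          2 * (v ^ (2 * n) * deriv h v ^ 2 * w v)) := (iB.const_mul _).add (iC.const_mul _)
      rw [integral_add (iA.const_mul _) iBC,
        integral_add (iB.const_mul _) (iC.const_mul _),
        integral_const_mul, integral_const_mul, integral_const_mul]
    -- apply induction hypothesis
    set S : ℝ := ∑ k ∈ Finset.range (n + 2), ∫ v : ℝ, (iteratedDeriv k h v) ^ 2 * w v with hS
    have Ik_nonneg : ∀ k, 0 ≤ ∫ v : ℝ, (iteratedDeriv k h v) ^ 2 * w v :=
      fun k => integral_nonneg fun v => mul_nonneg (sq_nonneg _) (w_nonneg v)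
    have hSsplit : S = (∫ v : ℝ, (iteratedDeriv 0 h v) ^ 2 * w v) +
        ∑ k ∈ Finset.range (n + 1), ∫ v : ℝ, (iteratedDeriv (k + 1) h v) ^ 2 * w v := by
      rw [hS, Finset.sum_range_succ']
      ring
    have hsum_le : ∑ k ∈ Finset.range (n + 1), ∫ v : ℝ, (iteratedDeriv k h v) ^ 2 * w v ≤ S := by
      have hx : S = (∑ k ∈ Finset.range (n + 1), ∫ v : ℝ, (iteratedDeriv k h v) ^ 2 * w v) +
          ∫ v : ℝ, (iteratedDeriv (n + 1) h v) ^ 2 * w v := by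
        rw [hS, Finset.sum_range_succ]
      have := Ik_nonneg (n + 1)
      linarith
    have b1 : ∫ v : ℝ, v ^ (2 * n) * h v ^ 2 * w v ≤ C * S := by
      refine (hCle h hh hs).trans ?_
      exact mul_le_mul_of_nonneg_left hsum_le hC.le
    have b2 : ∫ v : ℝ, v ^ (2 * n) * deriv h v ^ 2 * w v ≤ C * S := by
      have h0 := hCle (deriv h) hh' hs.deriv
      have heq : ∑ k ∈ Finset.range (n + 1), ∫ v : ℝ, (iteratedDeriv k (deriv h) v) ^ 2 * w v
          = ∑ k ∈ Finset.range (n + 1), ∫ v : ℝ, (iteratedDeriv (k + 1) h v) ^ 2 * w v := by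
        refine Finset.sum_congr rfl fun k _ => ?_
        rw [← iteratedDeriv_succ']
      rw [heq] at h0
      refine h0.trans (mul_le_mul_of_nonneg_left ?_ hC.le)
      have h00 := Ik_nonneg 0
      linarith [hSsplit]
    have b3 : ∫ v : ℝ, h v ^ 2 * w v ≤ S := by
      have : ∫ v : ℝ, h v ^ 2 * w v = ∫ v : ℝ, (iteratedDeriv 0 h v) ^ 2 * w v := by
        simp [iteratedDeriv_zero]
      rw [this, hSsplit]
      have : 0 ≤ ∑ k ∈ Finset.range (n + 1), ∫ v : ℝ, (iteratedDeriv (k + 1) h v) ^ 2 * w v :=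
        Finset.sum_nonneg fun k _ => Ik_nonneg (k + 1)
      linarith
    rw [step1]
    rw [step3] at step2
    have m1 : 8 * (n : ℝ) ^ 2 * (∫ v : ℝ, v ^ (2 * n) * h v ^ 2 * w v)
        ≤ 8 * (n : ℝ) ^ 2 * (C * S) :=
      mul_le_mul_of_nonneg_left b1 (by positivity)
    have m3 : 8 * (n : ℝ) ^ 2 * (∫ v : ℝ, h v ^ 2 * w v) ≤ 8 * (n : ℝ) ^ 2 * S :=
      mul_le_mul_of_nonneg_left b3 (by positivity)
    nlinarith [step2, hmono', m1, m3, b1, b2]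

end GMB

open GMB in
/-- generalized Villani lemma. For every `n ≥ 1` there exists `C > 0`
such that for every smooth compactly supported `h : ℝ → ℝ`,
`∫ v^{2n} h(v)² e^{−v²/2} dv ≤ C Σ_{k=0}^{n} ∫ (h⁽ᵏ⁾(v))² e^{−v²/2} dv`. -/
theorem gaussian_moment_bound (n : ℕ) (hn : 1 ≤ n) :
    ∃ C : ℝ, 0 < C ∧ ∀ h : ℝ → ℝ, ContDiff ℝ (⊤ : ℕ∞) h → HasCompactSupport h →
      ∫ v : ℝ, v ^ (2 * n) * h v ^ 2 * Real.exp (-v ^ 2 / 2)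
        ≤ C * ∑ k ∈ Finset.range (n + 1),
            ∫ v : ℝ, (iteratedDeriv k h v) ^ 2 * Real.exp (-v ^ 2 / 2) := by
  obtain ⟨C, hC, hle⟩ := GMB.main n
  exact ⟨C, hC, fun h hh hs => by simpa [GMB.w] using hle h hh hs⟩
end
end

section
/- Suppose −x·∇U₀(x) ≤ −κ|x|² for all x outside a compact set K (for some κ > 0), and ∇²U₀ is bounded. Define V_b(x,v) = exp(b(U₀(x) + |v|²/2 − a x·v/√(1+|x|²))) and L₁* h = −v·∇_x h + (∇U₀ − γv)·∇_v h + γ Δ_v h. Then there exist a > 0 and b₀ ∈ (0,1) such that for all b ∈ (0,b₀) there exist constants C₁, C₂, C₃ > 0 with L₁* V_b(x,v) ≤ (C₁ − C₂|v|² − C₃|x|) V_b(x,v) for all (x,v) ∈ ℝ^d × ℝ^d. -/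
open MeasureTheory ProbabilityTheory Real

noncomputable section

/-- Lyapunov weight `V_b(x,v) = exp(b(U₀(x) + |v|²/2 − a x·v/√(1+|x|²)))`. -/
def Vb {d : ℕ} (U₀ : (Fin d → ℝ) → ℝ) (a b : ℝ) (p : Phase d) : ℝ :=
  Real.exp (b * (U₀ p.1 + (∑ i, p.2 i ^ 2) / 2
    - a * (∑ i, p.1 i * p.2 i) / Real.sqrt (1 + ∑ i, p.1 i ^ 2)))

/-- Langevin adjoint part `L₁* h = −v·∇_x h + (∇U₀ − γv)·∇_v h + γ Δ_v h`. -/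
def L1star {d : ℕ} (γ : ℝ) (U₀ : (Fin d → ℝ) → ℝ) (f : Phase d → ℝ) (p : Phase d) : ℝ :=
  -(∑ i, p.2 i * pdx i f p) + (∑ i, (pd i U₀ p.1 - γ * p.2 i) * pdv i f p)
    + γ * ∑ i, pdv i (pdv i f) p

section Aux
variable {d : ℕ}

private lemma hasDerivAt_line {E : Type*} [NormedAddCommGroup E] [NormedSpace ℝ E]
    (p e : E) (t : ℝ) : HasDerivAt (fun s : ℝ => p + s • e) e t := by
  simpa using (((hasDerivAt_id t).smul_const e).const_add p)

private lemma fderiv_eq_of_line {f : Phase d → ℝ} {p : Phase d}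
    (hf : DifferentiableAt ℝ f p) {e : Phase d} {D : ℝ}
    (h : HasDerivAt (fun t : ℝ => f (p + t • e)) D 0) :
    fderiv ℝ f p e = D := by
  have hfd : HasFDerivAt f (fderiv ℝ f p) (p + (0:ℝ) • e) := by
    simpa using hf.hasFDerivAt
  have h2 := hfd.comp_hasDerivAt 0 (hasDerivAt_line p e 0)
  exact (h2 : HasDerivAt (fun t : ℝ => f (p + t • e)) _ 0).unique h

private lemma sx_pos (x : Fin d → ℝ) : 0 < Real.sqrt (1 + ∑ i, x i ^ 2) := by
  apply Real.sqrt_pos.2; positivity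

private lemma sx_ne (x : Fin d → ℝ) : Real.sqrt (1 + ∑ i, x i ^ 2) ≠ 0 := (sx_pos x).ne'

private lemma diffX (i : Fin d) : Differentiable ℝ (fun p : Phase d => p.1 i) :=
  ((ContinuousLinearMap.proj i).comp
    (ContinuousLinearMap.fst ℝ (Fin d → ℝ) (Fin d → ℝ))).differentiable

private lemma diffV (i : Fin d) : Differentiable ℝ (fun p : Phase d => p.2 i) :=
  ((ContinuousLinearMap.proj i).comp
    (ContinuousLinearMap.snd ℝ (Fin d → ℝ) (Fin d → ℝ))).differentiable

private lemma diffSum2 : Differentiable ℝ (fun p : Phase d => ∑ i, p.2 i ^ 2) :=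
  Differentiable.fun_sum (𝕜 := ℝ) fun i _ => (diffV i).pow 2

private lemma diffSum1 : Differentiable ℝ (fun p : Phase d => ∑ i, p.1 i ^ 2) :=
  Differentiable.fun_sum (𝕜 := ℝ) fun i _ => (diffX i).pow 2

private lemma diffN : Differentiable ℝ (fun p : Phase d => ∑ i, p.1 i * p.2 i) :=
  Differentiable.fun_sum (𝕜 := ℝ) fun i _ => (diffX i).mul (diffV i)

private lemma diffSx : Differentiable ℝ (fun p : Phase d => Real.sqrt (1 + ∑ i, p.1 i ^ 2)) := by
  apply Differentiable.sqrt
  · exact (differentiable_const 1).add diffSum1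
  · intro p; positivity

private lemma diff_Vb (U₀ : (Fin d → ℝ) → ℝ) (hU₀ : Differentiable ℝ U₀) (a b : ℝ) :
    Differentiable ℝ (Vb U₀ a b) := by
  have hg : Differentiable ℝ (fun p : Phase d =>
      b * (U₀ p.1 + (∑ i, p.2 i ^ 2) / 2
        - a * (∑ i, p.1 i * p.2 i) / Real.sqrt (1 + ∑ i, p.1 i ^ 2))) := by
    simp only [div_eq_mul_inv]
    apply Differentiable.const_mul
    apply Differentiable.sub
    · exact (hU₀.comp differentiable_fst).add (diffSum2.mul (differentiable_const _))
    · exact (diffN.const_mul a).mul (diffSx.inv fun p => sx_ne p.1)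
  exact hg.exp

private lemma hlin (y c : ℝ) : HasDerivAt (fun t : ℝ => y + t * c) c 0 := by
  simpa using ((hasDerivAt_id (0:ℝ)).mul_const c).const_add y

end Aux
section Aux2
variable {d : ℕ}

private lemma hasDerivAt_Vb_v (U₀ : (Fin d → ℝ) → ℝ) (a b : ℝ) (i : Fin d) (p : Phase d) :
    HasDerivAt (fun t : ℝ => Vb U₀ a b (p + t • ((0, Pi.single i 1) : Phase d)))
      (b * (p.2 i - a * p.1 i / Real.sqrt (1 + ∑ j, p.1 j ^ 2)) * Vb U₀ a b p) 0 := by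
  have heq : (fun t : ℝ => Vb U₀ a b (p + t • ((0, Pi.single i 1) : Phase d)))
      = fun t => Real.exp (b * (U₀ p.1 + (∑ j, (p.2 j + t * (Pi.single i 1 : Fin d → ℝ) j) ^ 2) / 2
          - a * (∑ j, p.1 j * (p.2 j + t * (Pi.single i 1 : Fin d → ℝ) j))
            / Real.sqrt (1 + ∑ j, p.1 j ^ 2))) := by
    funext t
    simp [Vb, Prod.smul_mk, Pi.add_apply, Pi.smul_apply, smul_eq_mul]
  rw [heq]
  have hsum : HasDerivAt (fun t : ℝ => ∑ j, (p.2 j + t * (Pi.single i 1 : Fin d → ℝ) j) ^ 2)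
      (2 * p.2 i) 0 := by
    have h := HasDerivAt.fun_sum (fun j (_ : j ∈ Finset.univ) =>
      (hlin (p.2 j) ((Pi.single i 1 : Fin d → ℝ) j)).pow 2)
    refine h.congr_deriv ?_
    simp [Pi.single_apply, mul_ite, Finset.sum_ite_eq']
  have hn : HasDerivAt (fun t : ℝ => ∑ j, p.1 j * (p.2 j + t * (Pi.single i 1 : Fin d → ℝ) j))
      (p.1 i) 0 := by
    have h := HasDerivAt.fun_sum (fun j (_ : j ∈ Finset.univ) =>
      (hlin (p.2 j) ((Pi.single i 1 : Fin d → ℝ) j)).const_mul (p.1 j))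
    refine h.congr_deriv ?_
    simp [Pi.single_apply, mul_ite, Finset.sum_ite_eq']
  have hinner : HasDerivAt (fun t : ℝ => b * (U₀ p.1
      + (∑ j, (p.2 j + t * (Pi.single i 1 : Fin d → ℝ) j) ^ 2) / 2
      - a * (∑ j, p.1 j * (p.2 j + t * (Pi.single i 1 : Fin d → ℝ) j))
        / Real.sqrt (1 + ∑ j, p.1 j ^ 2)))
      (b * (p.2 i - a * p.1 i / Real.sqrt (1 + ∑ j, p.1 j ^ 2))) 0 := by
    have h := ((((hasDerivAt_const (0:ℝ) (U₀ p.1)).add (hsum.div_const 2)).sub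
      ((hn.const_mul a).div_const (Real.sqrt (1 + ∑ j, p.1 j ^ 2)))).const_mul b)
    refine h.congr_deriv ?_
    ring
  have h2 := hinner.exp
  convert h2 using 1
  simp only [Vb, zero_mul, add_zero]
  ring

private lemma pdv_Vb (U₀ : (Fin d → ℝ) → ℝ) (hU₀ : Differentiable ℝ U₀) (a b : ℝ)
    (i : Fin d) (p : Phase d) :
    pdv i (Vb U₀ a b) p
      = b * (p.2 i - a * p.1 i / Real.sqrt (1 + ∑ j, p.1 j ^ 2)) * Vb U₀ a b p := by
  unfold pdv
  exact fderiv_eq_of_line (diff_Vb U₀ hU₀ a b p) (hasDerivAt_Vb_v U₀ a b i p)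

end Aux2
section Aux3
variable {d : ℕ}

private lemma hasDerivAt_Vb_x (U₀ : (Fin d → ℝ) → ℝ) (hU₀ : Differentiable ℝ U₀)
    (a b : ℝ) (i : Fin d) (p : Phase d) :
    HasDerivAt (fun t : ℝ => Vb U₀ a b (p + t • ((Pi.single i 1, 0) : Phase d)))
      (b * (pd i U₀ p.1
        - (a * p.2 i * Real.sqrt (1 + ∑ j, p.1 j ^ 2)
           - a * (∑ j, p.1 j * p.2 j) * (p.1 i / Real.sqrt (1 + ∑ j, p.1 j ^ 2)))
          / Real.sqrt (1 + ∑ j, p.1 j ^ 2) ^ 2)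
        * Vb U₀ a b p) 0 := by
  have heq : (fun t : ℝ => Vb U₀ a b (p + t • ((Pi.single i 1, 0) : Phase d)))
      = fun t => Real.exp (b * (U₀ (p.1 + t • (Pi.single i 1 : Fin d → ℝ)) + (∑ j, p.2 j ^ 2) / 2
          - a * (∑ j, (p.1 j + t * (Pi.single i 1 : Fin d → ℝ) j) * p.2 j)
            / Real.sqrt (1 + ∑ j, (p.1 j + t * (Pi.single i 1 : Fin d → ℝ) j) ^ 2))) := by
    funext t
    simp [Vb, Prod.smul_mk, Pi.add_apply, Pi.smul_apply, smul_eq_mul]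
  rw [heq]
  have hU : HasDerivAt (fun t : ℝ => U₀ (p.1 + t • (Pi.single i 1 : Fin d → ℝ))) (pd i U₀ p.1) 0 := by
    have h0 : HasFDerivAt U₀ (fderiv ℝ U₀ p.1) (p.1 + (0:ℝ) • (Pi.single i 1 : Fin d → ℝ)) := by
      simpa using (hU₀ p.1).hasFDerivAt
    exact h0.comp_hasDerivAt 0 (hasDerivAt_line p.1 ((Pi.single i 1 : Fin d → ℝ)) 0)
  have hnum : HasDerivAt
      (fun t : ℝ => a * ∑ j, (p.1 j + t * (Pi.single i 1 : Fin d → ℝ) j) * p.2 j)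
      (a * p.2 i) 0 := by
    have h := HasDerivAt.fun_sum (fun j (_ : j ∈ Finset.univ) =>
      (hlin (p.1 j) ((Pi.single i 1 : Fin d → ℝ) j)).mul_const (p.2 j))
    have h2 := h.const_mul a
    refine h2.congr_deriv ?_
    simp [Pi.single_apply, ite_mul, Finset.sum_ite_eq']
  have hin : HasDerivAt
      (fun t : ℝ => 1 + ∑ j, (p.1 j + t * (Pi.single i 1 : Fin d → ℝ) j) ^ 2)
      (2 * p.1 i) 0 := by
    have h := HasDerivAt.fun_sum (fun j (_ : j ∈ Finset.univ) =>
      (hlin (p.1 j) ((Pi.single i 1 : Fin d → ℝ) j)).pow 2)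
    have h2 := h.const_add 1
    refine h2.congr_deriv ?_
    simp [Pi.single_apply, mul_ite, Finset.sum_ite_eq']
  have hden : HasDerivAt
      (fun t : ℝ => Real.sqrt (1 + ∑ j, (p.1 j + t * (Pi.single i 1 : Fin d → ℝ) j) ^ 2))
      (p.1 i / Real.sqrt (1 + ∑ j, p.1 j ^ 2)) 0 := by
    have h3 := hin.sqrt (by positivity)
    convert h3 using 1
    simp only [zero_mul, add_zero]
    ring
  have hq := hnum.div hden (by simpa using sx_ne p.1)
  have hinner := (((hU.add (hasDerivAt_const (0:ℝ) ((∑ j, p.2 j ^ 2) / 2))).sub hq).const_mul b)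
  have h2 := hinner.exp
  refine h2.congr_deriv ?_
  simp only [Vb, Pi.add_apply, Pi.sub_apply, Pi.div_apply, zero_mul, add_zero, zero_smul]
  ring
end Aux3
section Aux4
variable {d : ℕ}

private lemma pdx_Vb (U₀ : (Fin d → ℝ) → ℝ) (hU₀ : Differentiable ℝ U₀) (a b : ℝ)
    (i : Fin d) (p : Phase d) :
    pdx i (Vb U₀ a b) p
      = b * (pd i U₀ p.1
        - (a * p.2 i * Real.sqrt (1 + ∑ j, p.1 j ^ 2)
           - a * (∑ j, p.1 j * p.2 j) * (p.1 i / Real.sqrt (1 + ∑ j, p.1 j ^ 2)))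
          / Real.sqrt (1 + ∑ j, p.1 j ^ 2) ^ 2)
        * Vb U₀ a b p := by
  unfold pdx
  exact fderiv_eq_of_line (diff_Vb U₀ hU₀ a b p) (hasDerivAt_Vb_x U₀ hU₀ a b i p)

private lemma pdvv_Vb (U₀ : (Fin d → ℝ) → ℝ) (hU₀ : Differentiable ℝ U₀) (a b : ℝ)
    (i : Fin d) (p : Phase d) :
    pdv i (pdv i (Vb U₀ a b)) p
      = (b + (b * (p.2 i - a * p.1 i / Real.sqrt (1 + ∑ j, p.1 j ^ 2))) ^ 2)
        * Vb U₀ a b p := by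
  have hfun : pdv i (Vb U₀ a b) = fun q : Phase d =>
      b * (q.2 i - a * q.1 i / Real.sqrt (1 + ∑ j, q.1 j ^ 2)) * Vb U₀ a b q := by
    funext q; exact pdv_Vb U₀ hU₀ a b i q
  rw [hfun]
  have hdiffF : DifferentiableAt ℝ (fun q : Phase d =>
      b * (q.2 i - a * q.1 i / Real.sqrt (1 + ∑ j, q.1 j ^ 2)) * Vb U₀ a b q) p := by
    have h1 : Differentiable ℝ (fun q : Phase d =>
        b * (q.2 i - a * q.1 i / Real.sqrt (1 + ∑ j, q.1 j ^ 2))) := by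
      simp only [div_eq_mul_inv]
      exact ((diffV i).sub (((diffX i).const_mul a).mul
        (diffSx.inv fun q => sx_ne q.1))).const_mul b
    exact (h1.mul (diff_Vb U₀ hU₀ a b)) p
  unfold pdv
  apply fderiv_eq_of_line hdiffF
  have heq : (fun t : ℝ => (fun q : Phase d =>
      b * (q.2 i - a * q.1 i / Real.sqrt (1 + ∑ j, q.1 j ^ 2)) * Vb U₀ a b q)
        (p + t • ((0, Pi.single i 1) : Phase d)))
      = fun t : ℝ => (b * ((p.2 i + t) - a * p.1 i / Real.sqrt (1 + ∑ j, p.1 j ^ 2)))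
          * Vb U₀ a b (p + t • ((0, Pi.single i 1) : Phase d)) := by
    funext t
    simp [Prod.smul_mk, Pi.add_apply, Pi.smul_apply, smul_eq_mul, Pi.single_eq_same]
  rw [heq]
  have h1 : HasDerivAt (fun t : ℝ =>
      b * ((p.2 i + t) - a * p.1 i / Real.sqrt (1 + ∑ j, p.1 j ^ 2))) b 0 := by
    simpa using (((hasDerivAt_id (0:ℝ)).const_add (p.2 i)).sub_const
      (a * p.1 i / Real.sqrt (1 + ∑ j, p.1 j ^ 2))).const_mul b
  have h2 := h1.mul (hasDerivAt_Vb_v U₀ a b i p)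
  refine h2.congr_deriv ?_
  simp only [zero_smul, add_zero]
  ring

private lemma L1star_Vb_eq (U₀ : (Fin d → ℝ) → ℝ) (hU₀ : Differentiable ℝ U₀)
    (γ a b : ℝ) (p : Phase d) :
    L1star γ U₀ (Vb U₀ a b) p =
      (-(∑ i, p.2 i * (b * (pd i U₀ p.1
            - (a * p.2 i * Real.sqrt (1 + ∑ j, p.1 j ^ 2)
               - a * (∑ j, p.1 j * p.2 j) * (p.1 i / Real.sqrt (1 + ∑ j, p.1 j ^ 2)))
              / Real.sqrt (1 + ∑ j, p.1 j ^ 2) ^ 2)))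
        + (∑ i, (pd i U₀ p.1 - γ * p.2 i)
            * (b * (p.2 i - a * p.1 i / Real.sqrt (1 + ∑ j, p.1 j ^ 2))))
        + γ * (∑ i, (b + (b * (p.2 i - a * p.1 i / Real.sqrt (1 + ∑ j, p.1 j ^ 2))) ^ 2)))
        * Vb U₀ a b p := by
  unfold L1star
  simp only [pdx_Vb U₀ hU₀ a b, pdv_Vb U₀ hU₀ a b, pdvv_Vb U₀ hU₀ a b]
  simp only [← mul_assoc]
  rw [← Finset.sum_mul, ← Finset.sum_mul, ← Finset.sum_mul]
  ring
end Aux4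


set_option maxHeartbeats 1600000 in
/-- Lyapunov property of `V_b` for the Langevin adjoint part:
under confinement (`−x·∇U₀(x) ≤ −κ|x|²` outside a compact set) and boundedness of
`∇²U₀`, there exist `a > 0`, `b₀ ∈ (0,1)` such that for every `b ∈ (0,b₀)` there are
`C₁, C₂, C₃ > 0` with `L₁* V_b ≤ (C₁ − C₂|v|² − C₃|x|) V_b` everywhere. -/
theorem langevin_lyapunov {d : ℕ}
    (U₀ : (Fin d → ℝ) → ℝ) (hU₀ : ContDiff ℝ (⊤ : ℕ∞) U₀)
    (γ : ℝ) (hγ : 0 < γ)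
    (M : ℝ) (hM : ∀ x, ‖iteratedFDeriv ℝ 2 U₀ x‖ ≤ M)
    (κ : ℝ) (hκ : 0 < κ) (K : Set (Fin d → ℝ)) (hK : IsCompact K)
    (hconf : ∀ x ∉ K, -(∑ i, x i * pd i U₀ x) ≤ -κ * ∑ i, x i ^ 2) :
    ∃ a : ℝ, 0 < a ∧ ∃ b₀ ∈ Set.Ioo (0 : ℝ) 1, ∀ b ∈ Set.Ioo (0 : ℝ) b₀,
      ∃ C₁ : ℝ, 0 < C₁ ∧ ∃ C₂ : ℝ, 0 < C₂ ∧ ∃ C₃ : ℝ, 0 < C₃ ∧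
        ∀ p : Phase d,
          L1star γ U₀ (Vb U₀ a b) p
            ≤ (C₁ - C₂ * (∑ i, p.2 i ^ 2) - C₃ * Real.sqrt (∑ i, p.1 i ^ 2))
                * Vb U₀ a b p := by
  have hU₀d : Differentiable ℝ U₀ := hU₀.differentiable (by simp)
  -- constants from compactness
  have hpdcont : Continuous fun y : Fin d → ℝ => ∑ i, y i * pd i U₀ y := by
    apply continuous_finset_sum
    intro i _
    exact (continuous_apply i).mul ((hU₀.continuous_fderiv (by simp)).clm_apply continuous_const)
  obtain ⟨C₀, hC₀⟩ := hK.exists_bound_of_continuousOn hpdcont.continuousOn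
  have hrcont : Continuous fun y : Fin d → ℝ => Real.sqrt (∑ i, y i ^ 2) :=
    Real.continuous_sqrt.comp (continuous_finset_sum _ fun i _ => (continuous_apply i).pow 2)
  obtain ⟨R, hR⟩ := hK.exists_bound_of_continuousOn hrcont.continuousOn
  set A := |C₀| + κ * |R| + κ with hAdef
  have hApos : 0 < A := by positivity
  -- the uniform confinement bound
  have hA : ∀ y : Fin d → ℝ, -(∑ i, y i * pd i U₀ y) / Real.sqrt (1 + ∑ i, y i ^ 2)
      ≤ -κ * Real.sqrt (∑ i, y i ^ 2) + A := by
    intro y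
    have hS0 : (0:ℝ) < Real.sqrt (1 + ∑ i, y i ^ 2) := sx_pos y
    have hX2 : (0:ℝ) ≤ ∑ i, y i ^ 2 := by positivity
    have hr0 : (0:ℝ) ≤ Real.sqrt (∑ i, y i ^ 2) := Real.sqrt_nonneg _
    have hr2 : Real.sqrt (∑ i, y i ^ 2) ^ 2 = ∑ i, y i ^ 2 := Real.sq_sqrt hX2
    have hS1 : (1:ℝ) ≤ Real.sqrt (1 + ∑ i, y i ^ 2) := by
      have h := Real.sqrt_le_sqrt (show (1:ℝ) ≤ 1 + ∑ i, y i ^ 2 by linarith)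
      rwa [Real.sqrt_one] at h
    by_cases hy : y ∈ K
    · have h1 : |∑ i, y i * pd i U₀ y| ≤ C₀ := by
        simpa [Real.norm_eq_abs] using hC₀ y hy
      have h2 : Real.sqrt (∑ i, y i ^ 2) ≤ |R| := by
        have := hR y hy
        rw [Real.norm_eq_abs, abs_of_nonneg hr0] at this
        exact le_trans this (le_abs_self R)
      have h3 : -(∑ i, y i * pd i U₀ y) / Real.sqrt (1 + ∑ i, y i ^ 2) ≤ |C₀| := by
        rw [div_le_iff₀ hS0]
        have hnb : -(∑ i, y i * pd i U₀ y) ≤ |C₀| :=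
          le_trans (neg_le_abs _) (le_trans h1 (le_abs_self C₀))
        nlinarith [abs_nonneg C₀, hS1]
      have h4 : κ * Real.sqrt (∑ i, y i ^ 2) ≤ κ * |R| :=
        mul_le_mul_of_nonneg_left h2 hκ.le
      rw [hAdef]
      linarith
    · have h1 := hconf y hy
      have h2 : -(∑ i, y i * pd i U₀ y) / Real.sqrt (1 + ∑ i, y i ^ 2)
          ≤ -κ * (∑ i, y i ^ 2) / Real.sqrt (1 + ∑ i, y i ^ 2) :=
        (div_le_div_iff_of_pos_right hS0).2 h1
      have hSle : Real.sqrt (1 + ∑ i, y i ^ 2) ≤ 1 + Real.sqrt (∑ i, y i ^ 2) := by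
        have h := Real.sqrt_le_sqrt
          (show 1 + ∑ i, y i ^ 2 ≤ (1 + Real.sqrt (∑ i, y i ^ 2)) ^ 2 by nlinarith)
        rwa [Real.sqrt_sq (by linarith)] at h
      have h3 : (Real.sqrt (∑ i, y i ^ 2) - 1) * Real.sqrt (1 + ∑ i, y i ^ 2)
          ≤ ∑ i, y i ^ 2 := by
        rcases le_or_gt 1 (Real.sqrt (∑ i, y i ^ 2)) with h | h
        · nlinarith
        · nlinarith
      have h4 : -κ * (∑ i, y i ^ 2) / Real.sqrt (1 + ∑ i, y i ^ 2)
          ≤ -κ * Real.sqrt (∑ i, y i ^ 2) + κ := by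
        rw [div_le_iff₀ hS0]
        nlinarith [mul_le_mul_of_nonneg_left h3 hκ.le]
      have h5 : κ ≤ A := by
        rw [hAdef]
        nlinarith [abs_nonneg C₀, abs_nonneg R, hκ.le]
      linarith
  refine ⟨γ / 2, by positivity, 1/16, ⟨by norm_num, by norm_num⟩, ?_⟩
  intro b hb
  obtain ⟨hb0, hb1⟩ := hb
  set a := γ / 2 with hadef
  clear_value a
  have ha0 : 0 < a := by rw [hadef]; positivity
  refine ⟨b * (a * A + 2 * a ^ 2 * γ + γ * (d:ℝ) + 2 * γ * b * a ^ 2), ?_,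
    b * γ / 4, by positivity, a * b * κ, by positivity, ?_⟩
  · have : 0 < a * A := mul_pos ha0 hApos
    have h2 : (0:ℝ) ≤ 2 * a ^ 2 * γ := by positivity
    have h3 : (0:ℝ) ≤ γ * (d:ℝ) := by positivity
    have h4 : (0:ℝ) ≤ 2 * γ * b * a ^ 2 := by positivity
    nlinarith
  intro p
  have hAx := hA p.1
  have hCS := Finset.sum_mul_sq_le_sq_mul_sq Finset.univ p.1 p.2
  rw [L1star_Vb_eq U₀ hU₀d γ a b p]
  set X2 := ∑ i, p.1 i ^ 2 with hX2def
  set V2 := ∑ i, p.2 i ^ 2 with hV2def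
  set N := ∑ i, p.1 i * p.2 i with hNdef
  set W := ∑ i, p.2 i * pd i U₀ p.1 with hWdef
  set XD := ∑ i, p.1 i * pd i U₀ p.1 with hXDdef
  set S := Real.sqrt (1 + X2) with hSdef
  set r := Real.sqrt X2 with hrdef
  set sv := Real.sqrt V2 with hsvdef
  set E2 := ∑ i, (p.2 i - a * p.1 i / S) ^ 2 with hE2def
  clear_value X2 V2 N W XD S r sv E2
  have hX2nn : (0:ℝ) ≤ X2 := by rw [hX2def]; positivity
  have hV2nn : (0:ℝ) ≤ V2 := by rw [hV2def]; positivity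
  have hS0 : (0:ℝ) < S := by rw [hSdef]; exact Real.sqrt_pos.2 (by linarith)
  have hSne : S ≠ 0 := hS0.ne'
  have hS1 : (1:ℝ) ≤ S := by
    rw [hSdef]
    have h := Real.sqrt_le_sqrt (show (1:ℝ) ≤ 1 + X2 by linarith)
    rwa [Real.sqrt_one] at h
  have hS2 : S ^ 2 = 1 + X2 := by rw [hSdef]; exact Real.sq_sqrt (by linarith)
  have hr0 : (0:ℝ) ≤ r := by rw [hrdef]; exact Real.sqrt_nonneg _
  have hr2 : r ^ 2 = X2 := by rw [hrdef]; exact Real.sq_sqrt hX2nn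
  have hrS : r ≤ S := by rw [hrdef, hSdef]; exact Real.sqrt_le_sqrt (by linarith)
  have hsv0 : (0:ℝ) ≤ sv := by rw [hsvdef]; exact Real.sqrt_nonneg _
  have hsv2 : sv ^ 2 = V2 := by rw [hsvdef]; exact Real.sq_sqrt hV2nn
  have hNle : N ≤ r * sv := by nlinarith [hCS, hr2, hsv2, mul_nonneg hr0 hsv0]
  have hNS : N / S ≤ sv := by
    rw [div_le_iff₀ hS0]
    nlinarith [hNle, hrS, hsv0]
  -- sum identities
  have e1 : (∑ i, p.2 i * (b * (pd i U₀ p.1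
        - (a * p.2 i * S - a * N * (p.1 i / S)) / S ^ 2)))
      = b * W + (-(a * b) / S) * V2 + (a * b * N / S ^ 3) * N := by
    have h : ∀ i ∈ Finset.univ, p.2 i * (b * (pd i U₀ p.1
        - (a * p.2 i * S - a * N * (p.1 i / S)) / S ^ 2))
        = b * (p.2 i * pd i U₀ p.1) + (-(a * b) / S) * p.2 i ^ 2
          + (a * b * N / S ^ 3) * (p.1 i * p.2 i) := by
      intro i _
      field_simp
      ring
    rw [Finset.sum_congr rfl h, Finset.sum_add_distrib, Finset.sum_add_distrib,
      ← Finset.mul_sum, ← Finset.mul_sum, ← Finset.mul_sum, ← hWdef, ← hV2def, ← hNdef]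
  have e2 : (∑ i, (pd i U₀ p.1 - γ * p.2 i) * (b * (p.2 i - a * p.1 i / S)))
      = b * W + (-(a * b) / S) * XD + (-(b * γ)) * V2 + (a * b * γ / S) * N := by
    have h : ∀ i ∈ Finset.univ, (pd i U₀ p.1 - γ * p.2 i) * (b * (p.2 i - a * p.1 i / S))
        = b * (p.2 i * pd i U₀ p.1) + (-(a * b) / S) * (p.1 i * pd i U₀ p.1)
          + (-(b * γ)) * p.2 i ^ 2 + (a * b * γ / S) * (p.1 i * p.2 i) := by
      intro i _
      field_simp
      ring
    rw [Finset.sum_congr rfl h, Finset.sum_add_distrib, Finset.sum_add_distrib,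
      Finset.sum_add_distrib, ← Finset.mul_sum, ← Finset.mul_sum, ← Finset.mul_sum,
      ← Finset.mul_sum, ← hWdef, ← hXDdef, ← hV2def, ← hNdef]
  have e3 : (∑ i, (b + (b * (p.2 i - a * p.1 i / S)) ^ 2)) = (d:ℝ) * b + b ^ 2 * E2 := by
    rw [Finset.sum_add_distrib, Finset.sum_const, Finset.card_univ, Fintype.card_fin,
      nsmul_eq_mul]
    congr 1
    simp only [mul_pow]
    rw [← Finset.mul_sum, hE2def]
  rw [e1, e2, e3]
  have hVpos : (0:ℝ) ≤ Vb U₀ a b p := (Real.exp_pos _).le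
  apply mul_le_mul_of_nonneg_right _ hVpos
  -- scalar inequality
  have hE2b : E2 ≤ 2 * V2 + 2 * a ^ 2 := by
    have h1 : E2 ≤ ∑ i, (2 * p.2 i ^ 2 + 2 * (a * p.1 i / S) ^ 2) := by
      rw [hE2def]
      apply Finset.sum_le_sum
      intro i _
      nlinarith [sq_nonneg (p.2 i + a * p.1 i / S)]
    have h2 : ∑ i, (2 * p.2 i ^ 2 + 2 * (a * p.1 i / S) ^ 2)
        = 2 * V2 + 2 * (a / S) ^ 2 * X2 := by
      rw [Finset.sum_congr rfl (fun i _ => (by ring :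
          2 * p.2 i ^ 2 + 2 * (a * p.1 i / S) ^ 2
            = 2 * p.2 i ^ 2 + (2 * (a / S) ^ 2) * p.1 i ^ 2)),
        Finset.sum_add_distrib, ← Finset.mul_sum, ← Finset.mul_sum, ← hV2def, ← hX2def]
    have h3 : (a / S) ^ 2 * X2 ≤ a ^ 2 := by
      have hX2S : X2 ≤ S ^ 2 := by nlinarith
      rw [div_pow, div_mul_eq_mul_div, div_le_iff₀ (pow_pos hS0 2)]
      nlinarith [sq_nonneg a]
    rw [h2] at h1
    linarith
  have hY : a * γ * sv ≤ γ / 8 * V2 + 2 * a ^ 2 * γ := by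
    nlinarith [mul_nonneg hγ.le (sq_nonneg (sv - 4 * a))]
  have u1 : a * b / S * V2 ≤ a * b * V2 :=
    mul_le_mul_of_nonneg_right (div_le_self (mul_nonneg ha0.le hb0.le) hS1) hV2nn
  have u2 : (0:ℝ) ≤ a * b / S ^ 3 * N ^ 2 :=
    mul_nonneg (div_nonneg (mul_nonneg ha0.le hb0.le) (pow_nonneg hS0.le 3)) (sq_nonneg N)
  have u3 : a * b * (-XD / S) ≤ a * b * (-κ * r + A) :=
    mul_le_mul_of_nonneg_left hAx (mul_nonneg ha0.le hb0.le)
  have u4 : a * b * γ * (N / S) ≤ a * b * γ * sv :=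
    mul_le_mul_of_nonneg_left hNS (by positivity)
  have u5 : b * (a * γ * sv) ≤ b * (γ / 8 * V2 + 2 * a ^ 2 * γ) :=
    mul_le_mul_of_nonneg_left hY hb0.le
  have u6 : γ * b ^ 2 * E2 ≤ γ * b ^ 2 * (2 * V2 + 2 * a ^ 2) :=
    mul_le_mul_of_nonneg_left hE2b (mul_nonneg hγ.le (sq_nonneg b))
  have u7 : (0:ℝ) ≤ b * γ * (1/8 - 2 * b) * V2 :=
    mul_nonneg (mul_nonneg (mul_nonneg hb0.le hγ.le) (by linarith)) hV2nn
  have hsub : a * b * V2 = γ / 2 * b * V2 := by rw [hadef]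
  have key : (-(b * W + (-(a * b) / S) * V2 + (a * b * N / S ^ 3) * N)
      + (b * W + (-(a * b) / S) * XD + (-(b * γ)) * V2 + (a * b * γ / S) * N)
      + γ * ((d:ℝ) * b + b ^ 2 * E2))
      ≤ a * b * V2 + a * b * (-κ * r + A) + (-(b * γ)) * V2
        + b * (γ / 8 * V2 + 2 * a ^ 2 * γ) + γ * ((d:ℝ) * b + b ^ 2 * (2 * V2 + 2 * a ^ 2)) := by
    ring_nf at u1 u2 u3 u4 u5 u6 ⊢
    linarith [u1, u2, u3, u4, u5, u6]
  ring_nf at key u7 hsub ⊢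
  linarith [key, u7, hsub]
end
end

section
/- Define V_b(x,v) = exp(b(U₀(x) + |v|²/2 − a x·v/√(1+|x|²))) and L₂* h(x,v) = (2/(1−ρ)) Σ_{i=1}^d E[(h(x,Vⁱ) − h(x,v)) Ψ((∂_i U₁(x)/2)(Vⁱ_i − v_i))]. Then for a > 0 and b ∈ (0,1) small enough there exists C > 0 such that L₂* V_b(x,v) ≤ C (1 + |v|) V_b(x,v) for all (x,v) ∈ ℝ^d × ℝ^d; in particular the Gaussian expectations defining L₂* V_b are finite. -/
open MeasureTheory ProbabilityTheory Real

noncomputable section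

/-- Jump adjoint part
`L₂* h(x,v) = (2/(1−ρ)) Σᵢ E[(h(x,Vⁱ) − h(x,v)) Ψ((∂ᵢU₁(x)/2)(Vⁱᵢ − vᵢ))]`. -/
def L2star {d : ℕ} (ρ : ℝ) (Ψ : ℝ → ℝ) (U₁ : (Fin d → ℝ) → ℝ)
    (f : Phase d → ℝ) (p : Phase d) : ℝ :=
  (2 / (1 - ρ)) * ∑ i, ∫ ξ, (f (p.1, jumpV ρ p.2 i ξ) - f p)
      * Ψ (pd i U₁ p.1 / 2 * ((ρ * p.2 i + Real.sqrt (1 - ρ ^ 2) * ξ) - p.2 i))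
      ∂(gaussianReal 0 1)


set_option maxHeartbeats 1000000 in
lemma int_gauss : Integrable (fun x : ℝ => Real.exp (3/8*x^2)) (gaussianReal 0 1) := by
  rw [gaussianReal_of_var_ne_zero 0 one_ne_zero,
    integrable_withDensity_iff (measurable_gaussianPDF 0 1)
      (ae_of_all _ fun x => ENNReal.ofReal_lt_top)]
  have : (fun x : ℝ => Real.exp (3/8*x^2) * (gaussianPDF 0 1 x).toReal)
      = fun x : ℝ => (Real.sqrt (2*π))⁻¹ * Real.exp (-(1/8) * x^2) := by
    funext x
    rw [gaussianPDF, ENNReal.toReal_ofReal (gaussianPDFReal_nonneg _ _ _), gaussianPDFReal]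
    push_cast
    rw [mul_one, mul_comm, mul_assoc, ← Real.exp_add]
    ring_nf
  rw [this]
  exact (integrable_exp_neg_mul_sq (by norm_num)).const_mul _

lemma Vb_jump {d : ℕ} (U₀ : (Fin d → ℝ) → ℝ) (a b ρ : ℝ) (x v : Fin d → ℝ)
    (i : Fin d) (ξ : ℝ) :
    Vb U₀ a b (x, jumpV ρ v i ξ) = Vb U₀ a b (x, v) *
      Real.exp (b * (((ρ * v i + Real.sqrt (1-ρ^2) * ξ)^2 - (v i)^2)/2
        - a * (x i / Real.sqrt (1 + ∑ j, x j ^ 2))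
          * ((ρ * v i + Real.sqrt (1-ρ^2) * ξ) - v i))) := by
  set w := ρ * v i + Real.sqrt (1-ρ^2) * ξ with hw
  have h1 : ∑ j, (jumpV ρ v i ξ) j ^ 2 = (∑ j, v j ^ 2) - v i ^ 2 + w ^ 2 := by
    unfold jumpV
    rw [← hw]
    have e : ∀ j, (Function.update v i w j) ^ 2
        = Function.update (fun j => v j ^ 2) i (w ^ 2) j := fun j => by
      exact (Function.apply_update (fun _ y => y ^ 2) v i w j)
    simp_rw [e]
    rw [Finset.sum_update_of_mem (Finset.mem_univ i)]
    rw [← Finset.add_sum_erase Finset.univ (fun j => v j ^ 2) (Finset.mem_univ i),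
      Finset.sdiff_singleton_eq_erase]
    ring
  have h2 : ∑ j, x j * (jumpV ρ v i ξ) j = (∑ j, x j * v j) - x i * v i + x i * w := by
    unfold jumpV
    rw [← hw]
    have e : ∀ j, x j * (Function.update v i w j)
        = Function.update (fun j => x j * v j) i (x i * w) j := fun j => by
      exact (Function.apply_update (fun j y => x j * y) v i w j)
    simp_rw [e]
    rw [Finset.sum_update_of_mem (Finset.mem_univ i)]
    rw [← Finset.add_sum_erase Finset.univ (fun j => x j * v j) (Finset.mem_univ i),
      Finset.sdiff_singleton_eq_erase]
    ring
  simp only [Vb, h1, h2, ← Real.exp_add]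
  congr 1
  ring

set_option maxHeartbeats 1000000 in
lemma key_exp_bound (ρ a b c vi ξ : ℝ) (hρ : -1 < ρ) (hρ' : ρ < 1)
    (ha0 : 0 < a) (ha1 : a ≤ 1) (hb0 : 0 < b) (hb1 : b ≤ 1/4) (hc : |c| ≤ 1) :
    b * (((ρ * vi + Real.sqrt (1-ρ^2) * ξ)^2 - vi^2)/2
        - a * c * ((ρ * vi + Real.sqrt (1-ρ^2) * ξ) - vi))
      ≤ ξ^2/4 + |ξ| + 4/(1-ρ^2) := by
  have hσ : (0:ℝ) < 1 - ρ^2 := by nlinarith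
  set s := Real.sqrt (1-ρ^2) with hsdef
  have hs2 : s^2 = 1 - ρ^2 := Real.sq_sqrt hσ.le
  have hs0 : 0 ≤ s := Real.sqrt_nonneg _
  have hs1 : s ≤ 1 := by
    calc s ≤ Real.sqrt 1 := Real.sqrt_le_sqrt (by nlinarith)
    _ = 1 := Real.sqrt_one
  have hsv : s^2 * vi^2 = (1-ρ^2) * vi^2 := by rw [hs2]
  have hsx : s^2 * ξ^2 = (1-ρ^2) * ξ^2 := by rw [hs2]
  have h1 : ρ * vi * (s * ξ) ≤ (1-ρ^2)*vi^2/4 + ρ^2*ξ^2 := by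
    nlinarith [sq_nonneg (s*vi - 2*ρ*ξ), hsv]
  have h2 : -(a * c * ((ρ-1) * vi)) ≤ 2 * a * |vi| := by
    calc -(a * c * ((ρ-1) * vi)) ≤ |a * c * ((ρ-1) * vi)| := neg_le_abs _
    _ = a * |c| * (|ρ-1| * |vi|) := by
        rw [abs_mul, abs_mul, abs_mul, abs_of_pos ha0]
    _ ≤ a * 1 * (2 * |vi|) := by
        gcongr
        · rw [abs_of_nonpos (by linarith)]; linarith
    _ = 2 * a * |vi| := by ring
  have h3 : 2 * a * |vi| ≤ s^2 * vi^2/4 + 4/(1-ρ^2) := by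
    have hq : 4/(1-ρ^2) * (1-ρ^2) = 4 := div_mul_cancel₀ _ hσ.ne'
    have habs2 : (1-ρ^2)^2 * |vi|^2 = (1-ρ^2)^2 * vi^2 := by rw [sq_abs]
    have key : 0 ≤ ((1-ρ^2) * vi^2/4 + 4/(1-ρ^2) - 2*|vi|) * (1-ρ^2) := by
      nlinarith [sq_nonneg ((1-ρ^2)*|vi| - 4), hq, habs2]
    have h3' : 2 * |vi| ≤ (1-ρ^2) * vi^2/4 + 4/(1-ρ^2) := by
      have := (mul_nonneg_iff_of_pos_right hσ).mp key
      linarith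
    have : 2 * a * |vi| ≤ 2 * |vi| := by nlinarith [abs_nonneg vi]
    rw [hs2]; linarith
  have h4 : -(a * c * (s * ξ)) ≤ |ξ| := by
    have e1 : a * |c| ≤ 1 := by nlinarith [abs_nonneg c]
    have e2 : s * |ξ| ≤ |ξ| := by nlinarith [abs_nonneg ξ]
    calc -(a * c * (s * ξ)) ≤ |a * c * (s * ξ)| := neg_le_abs _
    _ = a * |c| * (s * |ξ|) := by
        rw [abs_mul, abs_mul, abs_mul, abs_of_pos ha0, abs_of_nonneg hs0]
    _ ≤ 1 * (s * |ξ|) := mul_le_mul_of_nonneg_right e1 (by positivity)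
    _ = s * |ξ| := one_mul _
    _ ≤ |ξ| := e2
  have hE : ((ρ * vi + s * ξ)^2 - vi^2)/2 - a * c * ((ρ * vi + s * ξ) - vi)
      ≤ ξ^2 + |ξ| + 4/(1-ρ^2) := by
    have expand : ((ρ * vi + s * ξ)^2 - vi^2)/2 - a * c * ((ρ * vi + s * ξ) - vi)
        = (ρ^2*vi^2 + 2*(ρ*vi*(s*ξ)) + s^2*ξ^2 - vi^2)/2
          + (-(a * c * ((ρ-1) * vi))) + (-(a * c * (s * ξ))) := by ring
    rw [expand]
    linarith [h1, h2, h3, h4, hsv, hsx, mul_nonneg hσ.le (sq_nonneg ξ)]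
  have hbound_nonneg : 0 ≤ ξ^2 + |ξ| + 4/(1-ρ^2) := by positivity
  calc b * (((ρ * vi + s * ξ)^2 - vi^2)/2 - a * c * ((ρ * vi + s * ξ) - vi))
      ≤ b * (ξ^2 + |ξ| + 4/(1-ρ^2)) := mul_le_mul_of_nonneg_left hE hb0.le
    _ ≤ (1/4) * (ξ^2 + |ξ| + 4/(1-ρ^2)) := mul_le_mul_of_nonneg_right hb1 hbound_nonneg
    _ ≤ ξ^2/4 + |ξ| + 4/(1-ρ^2) := by
        have h5 : (0:ℝ) ≤ |ξ| := abs_nonneg ξ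
        have h6 : (0:ℝ) ≤ 4/(1-ρ^2) := by positivity
        linarith

lemma psi_growth (Ψ : ℝ → ℝ) (hΨ : ContDiff ℝ (⊤ : ℕ∞) Ψ) (M : ℝ)
    (hM : ∀ s, |deriv Ψ s| ≤ M) (z : ℝ) : Ψ z ≤ Ψ 0 + M * |z| := by
  have h := Convex.norm_image_sub_le_of_norm_deriv_le
    (f := Ψ) (s := Set.univ) (x := (0:ℝ)) (y := z)
    (fun x _ => (hΨ.differentiable (by simp)).differentiableAt)
    (fun x _ => hM x) convex_univ (Set.mem_univ _) (Set.mem_univ _)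
  simp only [Real.norm_eq_abs, sub_zero] at h
  have := (abs_le.mp h).2
  linarith [this]

lemma pd_bound {d : ℕ} (U₁ : (Fin d → ℝ) → ℝ) (M : ℝ)
    (hM : ∀ x, ‖iteratedFDeriv ℝ 1 U₁ x‖ ≤ M) (i : Fin d) (x : Fin d → ℝ) :
    |pd i U₁ x| ≤ M := by
  have h : pd i U₁ x = iteratedFDeriv ℝ 1 U₁ x (fun _ => Pi.single i 1) := by
    rw [iteratedFDeriv_one_apply]; rfl
  rw [h, ← Real.norm_eq_abs]
  calc ‖iteratedFDeriv ℝ 1 U₁ x (fun _ => Pi.single i 1)‖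
      ≤ ‖iteratedFDeriv ℝ 1 U₁ x‖ * ∏ j : Fin 1, ‖(Pi.single i 1 : Fin d → ℝ)‖ :=
        (iteratedFDeriv ℝ 1 U₁ x).le_opNorm _
    _ ≤ M * 1 := by
        apply mul_le_mul (hM x) _ (by positivity) ((norm_nonneg _).trans (hM x))
        simp [Pi.norm_single]
    _ = M := mul_one M

set_option maxHeartbeats 2000000 in
/-- For `a > 0` and `b ∈ (0,1)` small enough there exists `C > 0`
with `L₂* V_b ≤ C (1 + |v|) V_b` everywhere; in particular the Gaussian expectations
defining `L₂* V_b` are finite. -/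
theorem jump_adjoint_lyapunov_bound {d : ℕ}
    (U₀ U₁ : (Fin d → ℝ) → ℝ)
    (hU₀ : ContDiff ℝ (⊤ : ℕ∞) U₀) (hU₁ : ContDiff ℝ (⊤ : ℕ∞) U₁)
    (hU₁bd : ∀ n : ℕ, 1 ≤ n → ∃ M : ℝ, ∀ x, ‖iteratedFDeriv ℝ n U₁ x‖ ≤ M)
    (ρ : ℝ) (hρ : ρ ∈ Set.Ioo (-1 : ℝ) 1)
    (Ψ : ℝ → ℝ) (hΨ : ContDiff ℝ (⊤ : ℕ∞) Ψ) (hΨpos : ∀ s, 0 ≤ Ψ s)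
    (hΨbd : ∀ n : ℕ, 1 ≤ n → ∃ M : ℝ, ∀ s, |iteratedDeriv n Ψ s| ≤ M)
    (hΨeq : ∀ s, Ψ s - Ψ (-s) = s) :
    ∃ a₀ : ℝ, 0 < a₀ ∧ ∃ b₀ ∈ Set.Ioo (0 : ℝ) 1,
      ∀ a ∈ Set.Ioo (0 : ℝ) a₀, ∀ b ∈ Set.Ioo (0 : ℝ) b₀,
        ∃ C : ℝ, 0 < C ∧
          (∀ (p : Phase d) (i : Fin d),
            Integrable (fun ξ => (Vb U₀ a b (p.1, jumpV ρ p.2 i ξ) - Vb U₀ a b p)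
              * Ψ (pd i U₁ p.1 / 2 * ((ρ * p.2 i + Real.sqrt (1 - ρ ^ 2) * ξ) - p.2 i)))
              (gaussianReal 0 1)) ∧
          ∀ p : Phase d,
            L2star ρ Ψ U₁ (Vb U₀ a b) p
              ≤ C * (1 + Real.sqrt (∑ i, p.2 i ^ 2)) * Vb U₀ a b p := by
  obtain ⟨MΨ, hMΨ⟩ := hΨbd 1 le_rfl
  obtain ⟨M₁, hM₁⟩ := hU₁bd 1 le_rfl
  have hMΨd : ∀ s, |deriv Ψ s| ≤ MΨ := by
    intro s; simpa [iteratedDeriv_one] using hMΨ s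
  have hMΨ0 : 0 ≤ MΨ := (abs_nonneg _).trans (hMΨd 0)
  have hM₁0 : 0 ≤ M₁ := (norm_nonneg _).trans (hM₁ (fun _ => 0))
  set A : ℝ := Ψ 0 + MΨ * M₁ + 1 with hAdef
  have hA0 : 0 < A := by
    have := hΨpos 0
    have := mul_nonneg hMΨ0 hM₁0
    simp only [hAdef]; linarith
  set Kρ : ℝ := 4 / (1 - ρ^2) with hKdef
  set D : ℝ := (Real.exp Kρ + 1) * A * Real.exp 8 with hDdef
  have hD0 : 0 < D := by
    apply mul_pos (mul_pos _ hA0) (Real.exp_pos _)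
    linarith [Real.exp_pos Kρ]
  set Ig : ℝ := ∫ ξ, Real.exp (3/8*ξ^2) ∂(gaussianReal 0 1) with hIgdef
  have hIg0 : 0 ≤ Ig := integral_nonneg fun ξ => (Real.exp_pos _).le
  refine ⟨1, one_pos, 1/4, by norm_num, ?_⟩
  intro a ha b hb
  obtain ⟨ha0, ha1⟩ := ha
  obtain ⟨hb0, hb1⟩ := hb
  set C : ℝ := max 1 ((2/(1-ρ)) * d * D * Ig) with hCdef
  have hC0 : (0:ℝ) < C := lt_of_lt_of_le one_pos (le_max_left _ _)
  -- the pointwise bound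
  have main : ∀ (p : Phase d) (i : Fin d) (ξ : ℝ),
      |(Vb U₀ a b (p.1, jumpV ρ p.2 i ξ) - Vb U₀ a b p)
        * Ψ (pd i U₁ p.1 / 2 * ((ρ * p.2 i + Real.sqrt (1 - ρ ^ 2) * ξ) - p.2 i))|
      ≤ Vb U₀ a b p * (1 + Real.sqrt (∑ j, p.2 j ^ 2)) * D * Real.exp (3/8*ξ^2) := by
    rintro ⟨x, v⟩ i ξ
    dsimp only
    have hs0 : (0:ℝ) ≤ Real.sqrt (1 - ρ^2) := Real.sqrt_nonneg _
    have hs1 : Real.sqrt (1 - ρ^2) ≤ 1 := by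
      calc Real.sqrt (1-ρ^2) ≤ Real.sqrt 1 :=
            Real.sqrt_le_sqrt (by nlinarith [hρ.1, hρ.2])
      _ = 1 := Real.sqrt_one
    set vn : ℝ := Real.sqrt (∑ j, v j ^ 2) with hvndef
    have hvn0 : 0 ≤ vn := Real.sqrt_nonneg _
    have hVp : 0 < Vb U₀ a b (x, v) := Real.exp_pos _
    -- |c| ≤ 1
    have hr : 0 < Real.sqrt (1 + ∑ j, x j ^ 2) := by
      apply Real.sqrt_pos.mpr
      have : (0:ℝ) ≤ ∑ j, x j ^ 2 := Finset.sum_nonneg fun j _ => sq_nonneg _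
      linarith
    have hxi : |x i| ≤ Real.sqrt (1 + ∑ j, x j ^ 2) := by
      rw [← Real.sqrt_sq_eq_abs]
      apply Real.sqrt_le_sqrt
      have h1 := Finset.single_le_sum (f := fun j => x j ^ 2)
        (fun j _ => sq_nonneg (x j)) (Finset.mem_univ i)
      have h2 : x i ^ 2 ≤ ∑ j, x j ^ 2 := by simpa using h1
      linarith
    have hc : |x i / Real.sqrt (1 + ∑ j, x j ^ 2)| ≤ 1 := by
      rw [abs_div, abs_of_pos hr, div_le_one hr]
      exact hxi
    -- exponent bound
    have hexp := key_exp_bound ρ a b (x i / Real.sqrt (1 + ∑ j, x j ^ 2)) (v i) ξ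
      hρ.1 hρ.2 ha0 ha1.le hb0 (by linarith) hc
    have hone_le : (1:ℝ) ≤ Real.exp (ξ^2/4 + |ξ|) := Real.one_le_exp (by positivity)
    have hEpos : 0 < Real.exp (ξ^2/4 + |ξ|) := Real.exp_pos _
    have hKpos : 0 < Real.exp Kρ := Real.exp_pos _
    have hVjle : Vb U₀ a b (x, jumpV ρ v i ξ)
        ≤ Vb U₀ a b (x, v) * (Real.exp Kρ * Real.exp (ξ^2/4 + |ξ|)) := by
      rw [Vb_jump U₀ a b ρ x v i ξ, ← Real.exp_add]
      apply mul_le_mul_of_nonneg_left _ hVp.le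
      apply Real.exp_le_exp.mpr
      rw [hKdef]
      linarith [hexp]
    have habs1 : |Vb U₀ a b (x, jumpV ρ v i ξ) - Vb U₀ a b (x, v)|
        ≤ Vb U₀ a b (x, v) * ((Real.exp Kρ + 1) * Real.exp (ξ^2/4 + |ξ|)) := by
      have hVjpos : 0 < Vb U₀ a b (x, jumpV ρ v i ξ) := Real.exp_pos _
      have hp1 : Vb U₀ a b (x, v) * 1 ≤ Vb U₀ a b (x, v) * Real.exp (ξ^2/4 + |ξ|) :=
        mul_le_mul_of_nonneg_left hone_le hVp.le
      have hp2 : 0 ≤ Vb U₀ a b (x, v) * (Real.exp Kρ * Real.exp (ξ^2/4 + |ξ|)) :=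
        mul_nonneg hVp.le (mul_nonneg hKpos.le hEpos.le)
      rw [abs_le]
      constructor
      · nlinarith [hVjpos]
      · nlinarith [hVjle]
    -- Ψ bound
    have hvi : |v i| ≤ vn := by
      rw [hvndef, ← Real.sqrt_sq_eq_abs]
      apply Real.sqrt_le_sqrt
      have h1 := Finset.single_le_sum (f := fun j => v j ^ 2)
        (fun j _ => sq_nonneg (v j)) (Finset.mem_univ i)
      simpa using h1
    have hwv : |(ρ * v i + Real.sqrt (1 - ρ ^ 2) * ξ) - v i| ≤ 2 * |v i| + |ξ| := by
      rw [show (ρ * v i + Real.sqrt (1 - ρ ^ 2) * ξ) - v i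
          = (ρ - 1) * v i + Real.sqrt (1 - ρ^2) * ξ from by ring]
      calc |(ρ - 1) * v i + Real.sqrt (1 - ρ^2) * ξ|
          ≤ |(ρ - 1) * v i| + |Real.sqrt (1 - ρ^2) * ξ| := abs_add_le _ _
        _ = |ρ - 1| * |v i| + Real.sqrt (1 - ρ^2) * |ξ| := by
            rw [abs_mul, abs_mul, abs_of_nonneg hs0]
        _ ≤ 2 * |v i| + 1 * |ξ| := by
            gcongr
            rw [abs_of_nonpos (by linarith [hρ.2])]
            linarith [hρ.1]
        _ = 2 * |v i| + |ξ| := by ring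
    have hpdb := pd_bound U₁ M₁ hM₁ i x
    have hz : |pd i U₁ x / 2 * ((ρ * v i + Real.sqrt (1 - ρ ^ 2) * ξ) - v i)|
        ≤ M₁/2 * (2 * |v i| + |ξ|) := by
      rw [abs_mul, abs_div]
      apply mul_le_mul _ hwv (abs_nonneg _) (by linarith)
      rw [show |(2:ℝ)| = 2 by norm_num]
      linarith
    have hpsi : Ψ (pd i U₁ x / 2 * ((ρ * v i + Real.sqrt (1 - ρ ^ 2) * ξ) - v i))
        ≤ A * (1 + vn) * (1 + |ξ|) := by
      have h1 := psi_growth Ψ hΨ MΨ hMΨd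
        (pd i U₁ x / 2 * ((ρ * v i + Real.sqrt (1 - ρ ^ 2) * ξ) - v i))
      have h2 := mul_le_mul_of_nonneg_left hz hMΨ0
      have hB2 : 0 ≤ MΨ * M₁ := mul_nonneg hMΨ0 hM₁0
      have h3 : MΨ * (M₁/2 * (2 * |v i| + |ξ|)) ≤ MΨ*M₁*vn + MΨ*M₁/2 * |ξ| := by
        have h4 := mul_le_mul_of_nonneg_left hvi hB2
        nlinarith [abs_nonneg ξ]
      have hΨ00 := hΨpos 0
      have hxv : 0 ≤ vn * |ξ| := mul_nonneg hvn0 (abs_nonneg ξ)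
      rw [hAdef]
      nlinarith [abs_nonneg ξ, hvn0, hΨ00, hB2, hxv]
    -- combine
    have hΨarg0 := hΨpos (pd i U₁ x / 2 * ((ρ * v i + Real.sqrt (1 - ρ ^ 2) * ξ) - v i))
    have hfinalexp : Real.exp (ξ^2/4 + |ξ|) * (1 + |ξ|)
        ≤ Real.exp 8 * Real.exp (3/8*ξ^2) := by
      have h1 : (1:ℝ) + |ξ| ≤ Real.exp |ξ| := by
        have := Real.add_one_le_exp |ξ|
        linarith
      calc Real.exp (ξ^2/4 + |ξ|) * (1 + |ξ|)
          ≤ Real.exp (ξ^2/4 + |ξ|) * Real.exp |ξ| :=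
            mul_le_mul_of_nonneg_left h1 (Real.exp_pos _).le
        _ = Real.exp (ξ^2/4 + |ξ| + |ξ|) := by rw [← Real.exp_add]
        _ ≤ Real.exp (8 + 3/8*ξ^2) := by
            apply Real.exp_le_exp.mpr
            nlinarith [sq_nonneg (|ξ| - 8), sq_abs ξ]
        _ = Real.exp 8 * Real.exp (3/8*ξ^2) := Real.exp_add _ _
    have hcoef : 0 ≤ Vb U₀ a b (x, v) * (1 + vn) * ((Real.exp Kρ + 1) * A) := by
      apply mul_nonneg (mul_nonneg hVp.le (by linarith))
      exact mul_nonneg (by positivity) hA0.le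
    calc |(Vb U₀ a b (x, jumpV ρ v i ξ) - Vb U₀ a b (x, v))
          * Ψ (pd i U₁ x / 2 * ((ρ * v i + Real.sqrt (1 - ρ ^ 2) * ξ) - v i))|
        = |Vb U₀ a b (x, jumpV ρ v i ξ) - Vb U₀ a b (x, v)|
          * Ψ (pd i U₁ x / 2 * ((ρ * v i + Real.sqrt (1 - ρ ^ 2) * ξ) - v i)) := by
          rw [abs_mul, abs_of_nonneg hΨarg0]
      _ ≤ (Vb U₀ a b (x, v) * ((Real.exp Kρ + 1) * Real.exp (ξ^2/4 + |ξ|)))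
          * (A * (1 + vn) * (1 + |ξ|)) := by
          apply mul_le_mul habs1 hpsi hΨarg0
          exact mul_nonneg hVp.le (by positivity)
      _ = (Vb U₀ a b (x, v) * (1 + vn) * ((Real.exp Kρ + 1) * A))
          * (Real.exp (ξ^2/4 + |ξ|) * (1 + |ξ|)) := by ring
      _ ≤ (Vb U₀ a b (x, v) * (1 + vn) * ((Real.exp Kρ + 1) * A))
          * (Real.exp 8 * Real.exp (3/8*ξ^2)) :=
          mul_le_mul_of_nonneg_left hfinalexp hcoef
      _ = Vb U₀ a b (x, v) * (1 + vn) * D * Real.exp (3/8*ξ^2) := by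
          rw [hDdef]; ring
  -- integrability
  have hint : ∀ (p : Phase d) (i : Fin d),
      Integrable (fun ξ => (Vb U₀ a b (p.1, jumpV ρ p.2 i ξ) - Vb U₀ a b p)
        * Ψ (pd i U₁ p.1 / 2 * ((ρ * p.2 i + Real.sqrt (1 - ρ ^ 2) * ξ) - p.2 i)))
        (gaussianReal 0 1) := by
    rintro ⟨x, v⟩ i
    dsimp only
    have hcont : Continuous (fun ξ : ℝ =>
        (Vb U₀ a b (x, jumpV ρ v i ξ) - Vb U₀ a b (x, v))
        * Ψ (pd i U₁ x / 2 * ((ρ * v i + Real.sqrt (1 - ρ ^ 2) * ξ) - v i))) := by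
      simp only [Vb_jump]
      apply Continuous.mul
      · exact (continuous_const.mul (Real.continuous_exp.comp (by fun_prop))).sub
          continuous_const
      · exact hΨ.continuous.comp (by fun_prop)
    apply Integrable.mono (int_gauss.const_mul
      (Vb U₀ a b (x, v) * (1 + Real.sqrt (∑ j, v j ^ 2)) * D))
      hcont.aestronglyMeasurable
    apply ae_of_all
    intro ξ
    have hVp : 0 < Vb U₀ a b (x, v) := Real.exp_pos _
    have hco : 0 ≤ Vb U₀ a b (x, v) * (1 + Real.sqrt (∑ j, v j ^ 2)) * D :=
      mul_nonneg (mul_nonneg hVp.le (by positivity)) hD0.le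
    simp only [Real.norm_eq_abs]
    rw [abs_of_nonneg (mul_nonneg hco (Real.exp_pos _).le)]
    exact main (x, v) i ξ
  refine ⟨C, hC0, hint, ?_⟩
  -- final estimate
  rintro ⟨x, v⟩
  dsimp only
  set vn : ℝ := Real.sqrt (∑ j, v j ^ 2) with hvndef
  have hvn0 : 0 ≤ vn := Real.sqrt_nonneg _
  have hVp : 0 < Vb U₀ a b (x, v) := Real.exp_pos _
  have hρ1 : (0:ℝ) < 1 - ρ := by linarith [hρ.2]
  have hfrac : (0:ℝ) ≤ 2/(1-ρ) := by positivity
  have hterm : ∀ i : Fin d,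
      (∫ ξ, (Vb U₀ a b (x, jumpV ρ v i ξ) - Vb U₀ a b (x, v))
        * Ψ (pd i U₁ x / 2 * ((ρ * v i + Real.sqrt (1 - ρ ^ 2) * ξ) - v i))
        ∂(gaussianReal 0 1))
      ≤ Vb U₀ a b (x, v) * (1 + vn) * D * Ig := by
    intro i
    have hI := hint (x, v) i
    dsimp only at hI
    calc (∫ ξ, (Vb U₀ a b (x, jumpV ρ v i ξ) - Vb U₀ a b (x, v))
          * Ψ (pd i U₁ x / 2 * ((ρ * v i + Real.sqrt (1 - ρ ^ 2) * ξ) - v i))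
          ∂(gaussianReal 0 1))
        ≤ ∫ ξ, Vb U₀ a b (x, v) * (1 + vn) * D * Real.exp (3/8*ξ^2)
          ∂(gaussianReal 0 1) := by
          apply integral_mono hI (int_gauss.const_mul _)
          intro ξ
          exact le_trans (le_abs_self _) (main (x, v) i ξ)
      _ = Vb U₀ a b (x, v) * (1 + vn) * D * Ig := by
          rw [hIgdef, integral_const_mul]
  have hsum : (∑ i : Fin d, ∫ ξ, (Vb U₀ a b (x, jumpV ρ v i ξ) - Vb U₀ a b (x, v))
        * Ψ (pd i U₁ x / 2 * ((ρ * v i + Real.sqrt (1 - ρ ^ 2) * ξ) - v i))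
        ∂(gaussianReal 0 1))
      ≤ (d : ℝ) * (Vb U₀ a b (x, v) * (1 + vn) * D * Ig) := by
    calc (∑ i : Fin d, ∫ ξ, (Vb U₀ a b (x, jumpV ρ v i ξ) - Vb U₀ a b (x, v))
          * Ψ (pd i U₁ x / 2 * ((ρ * v i + Real.sqrt (1 - ρ ^ 2) * ξ) - v i))
          ∂(gaussianReal 0 1))
        ≤ ∑ _i : Fin d, Vb U₀ a b (x, v) * (1 + vn) * D * Ig :=
          Finset.sum_le_sum fun i _ => hterm i
      _ = (d : ℝ) * (Vb U₀ a b (x, v) * (1 + vn) * D * Ig) := by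
          rw [Finset.sum_const, Finset.card_univ, Fintype.card_fin, nsmul_eq_mul]
  have hL : L2star ρ Ψ U₁ (Vb U₀ a b) (x, v)
      ≤ (2/(1-ρ)) * ((d : ℝ) * (Vb U₀ a b (x, v) * (1 + vn) * D * Ig)) := by
    unfold L2star
    dsimp only
    exact mul_le_mul_of_nonneg_left hsum hfrac
  have hCge : (2/(1-ρ)) * d * D * Ig ≤ C := le_max_right _ _
  calc L2star ρ Ψ U₁ (Vb U₀ a b) (x, v)
      ≤ (2/(1-ρ)) * ((d : ℝ) * (Vb U₀ a b (x, v) * (1 + vn) * D * Ig)) := hL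
    _ = ((2/(1-ρ)) * d * D * Ig) * ((1 + vn) * Vb U₀ a b (x, v)) := by ring
    _ ≤ C * ((1 + vn) * Vb U₀ a b (x, v)) := by
        apply mul_le_mul_of_nonneg_right hCge
        exact mul_nonneg (by linarith) hVp.le
    _ = C * (1 + vn) * Vb U₀ a b (x, v) := by ring
end
end

section
/- Suppose Ψ : ℝ → [0,∞) has bounded first derivative and |∂_i U₁(x)| ≤ M_i for all x. Then the jump rate λ_i(x,v) = (2/(1−ρ)) E[Ψ((∂_i U₁(x)/2)(v_i − Vⁱ_i))] satisfies, for all (x,v), λ_i(x,v) ≤ (1/(1−ρ)) ( 2Ψ(0) + ‖Ψ'‖_∞ M_i ( (1−ρ)|v_i| + √(2(1−ρ²)/π) ) ). -/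
open MeasureTheory ProbabilityTheory Real

noncomputable section

section AuxJumpRate
open Set Filter

lemma int_Ioi : ∫ x in Ioi (0:ℝ), x * Real.exp (-(2⁻¹:ℝ) * x ^ 2) = 1 := by
  have hderiv : ∀ x ∈ Ici (0:ℝ), HasDerivAt (fun y : ℝ => -Real.exp (-(2⁻¹:ℝ) * y ^ 2))
      (x * Real.exp (-(2⁻¹:ℝ) * x ^ 2)) x := by
    intro x _
    have h1 : HasDerivAt (fun y : ℝ => -(2⁻¹:ℝ) * y ^ 2) (-x) x := by
      have := (hasDerivAt_pow 2 x).const_mul (-(2⁻¹:ℝ))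
      exact this.congr_deriv (by push_cast; ring)
    have := (h1.exp).neg
    exact this.congr_deriv (by ring)
  have f'int : IntegrableOn (fun x : ℝ => x * Real.exp (-(2⁻¹:ℝ) * x ^ 2)) (Ioi 0) :=
    (integrable_mul_exp_neg_mul_sq (b := (2⁻¹:ℝ)) (by norm_num)).integrableOn
  have hf : Tendsto (fun y : ℝ => -Real.exp (-(2⁻¹:ℝ) * y ^ 2)) atTop (nhds 0) := by
    rw [show (0:ℝ) = -0 by norm_num]
    refine (Real.tendsto_exp_atBot.comp ?_).neg
    have : Tendsto (fun y : ℝ => y ^ 2) atTop atTop := tendsto_pow_atTop (by norm_num)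
    have h3 : Tendsto (fun y : ℝ => -((2⁻¹:ℝ) * y ^ 2)) atTop atBot :=
      tendsto_neg_atBot_iff.mpr (this.const_mul_atTop (by norm_num))
    exact h3.congr fun y => by ring
  have := integral_Ioi_of_hasDerivAt_of_tendsto' hderiv f'int hf
  rw [this]; norm_num

lemma int_abs_exp : ∫ x : ℝ, |x| * Real.exp (-(2⁻¹:ℝ) * x ^ 2) = 2 := by
  have h2 := integral_comp_abs (f := fun t : ℝ => t * Real.exp (-(2⁻¹:ℝ) * t ^ 2))
  simp only [sq_abs] at h2
  rw [h2, int_Ioi]; norm_num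

lemma integrable_abs_exp : Integrable (fun x : ℝ => |x| * Real.exp (-(2⁻¹:ℝ) * x ^ 2)) := by
  have := (integrable_mul_exp_neg_mul_sq (b := (2⁻¹:ℝ)) (by norm_num)).abs
  refine this.congr (Filter.Eventually.of_forall fun x => ?_)
  simp [abs_mul, abs_of_pos (Real.exp_pos _)]

lemma gaussPDF_toNNReal :
    gaussianReal 0 1 = (volume : Measure ℝ).withDensity
      (fun x => ((Real.toNNReal (gaussianPDFReal 0 1 x) : NNReal) : ENNReal)) := by
  rw [gaussianReal_of_var_ne_zero 0 one_ne_zero]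
  congr 1

lemma gauss_integral_eq (f : ℝ → ℝ) :
    ∫ x, f x ∂(gaussianReal 0 1) = ∫ x, gaussianPDFReal 0 1 x * f x := by
  rw [gaussPDF_toNNReal,
    integral_withDensity_eq_integral_smul ((measurable_gaussianPDFReal 0 1).real_toNNReal)]
  congr 1; funext x
  simp [NNReal.smul_def, Real.coe_toNNReal _ (gaussianPDFReal_nonneg 0 1 x)]

lemma gauss_integrable (f : ℝ → ℝ)
    (h : Integrable (fun x => gaussianPDFReal 0 1 x * f x)) :
    Integrable f (gaussianReal 0 1) := by
  rw [gaussPDF_toNNReal,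
    integrable_withDensity_iff_integrable_smul ((measurable_gaussianPDFReal 0 1).real_toNNReal)]
  refine h.congr (Filter.Eventually.of_forall fun x => ?_)
  simp [NNReal.smul_def, Real.coe_toNNReal _ (gaussianPDFReal_nonneg 0 1 x)]

lemma gaussPDFReal_eq (x : ℝ) :
    gaussianPDFReal 0 1 x = (Real.sqrt (2 * π))⁻¹ * Real.exp (-(2⁻¹:ℝ) * x ^ 2) := by
  simp only [gaussianPDFReal, NNReal.coe_one, mul_one, sub_zero]
  rw [show -x ^ 2 / (2:ℝ) = -(2⁻¹:ℝ) * x ^ 2 by ring]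

lemma gauss_abs_integrable : Integrable (fun x : ℝ => |x|) (gaussianReal 0 1) := by
  apply gauss_integrable
  have : Integrable (fun x : ℝ => (Real.sqrt (2 * π))⁻¹ *
      (|x| * Real.exp (-(2⁻¹:ℝ) * x ^ 2))) := integrable_abs_exp.const_mul _
  refine this.congr (Filter.Eventually.of_forall fun x => ?_)
  simp only [gaussPDFReal_eq]; ring

lemma gauss_abs_integral : ∫ x, |x| ∂(gaussianReal 0 1) = Real.sqrt (2 / π) := by
  rw [gauss_integral_eq]
  have : ∫ x : ℝ, gaussianPDFReal 0 1 x * |x|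
      = (Real.sqrt (2 * π))⁻¹ * ∫ x : ℝ, |x| * Real.exp (-(2⁻¹:ℝ) * x ^ 2) := by
    rw [← integral_const_mul]
    congr 1; funext x; rw [gaussPDFReal_eq]; ring
  rw [this, int_abs_exp]
  rw [show (2:ℝ)/π = 4/(2*π) by ring, Real.sqrt_div (by norm_num) (2*π),
    show (4:ℝ) = 2^2 by norm_num, Real.sqrt_sq (by norm_num)]
  ring

end AuxJumpRate

/-- thinning bound on the jump rate. If `|Ψ'| ≤ MΨ` and
`|∂ᵢU₁| ≤ Mᵢ`, then the jump rate
`λᵢ(x,v) = (2/(1−ρ)) E[Ψ((∂ᵢU₁(x)/2)(vᵢ − Vⁱᵢ))]` satisfies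
`λᵢ(x,v) ≤ (1/(1−ρ))(2Ψ(0) + MΨ Mᵢ ((1−ρ)|vᵢ| + √(2(1−ρ²)/π)))`. -/
theorem jump_rate_bound {d : ℕ}
    (U₁ : (Fin d → ℝ) → ℝ) (hU₁ : ContDiff ℝ (⊤ : ℕ∞) U₁)
    (ρ : ℝ) (hρ : ρ ∈ Set.Ico (-1 : ℝ) 1)
    (Ψ : ℝ → ℝ) (hΨdiff : Differentiable ℝ Ψ) (hΨpos : ∀ s, 0 ≤ Ψ s)
    (MΨ : ℝ) (hMΨ : ∀ s, |deriv Ψ s| ≤ MΨ)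
    (i : Fin d) (Mi : ℝ) (hMi : ∀ x, |pd i U₁ x| ≤ Mi) :
    ∀ x v : Fin d → ℝ,
      (2 / (1 - ρ)) * ∫ ξ, Ψ (pd i U₁ x / 2
            * (v i - (ρ * v i + Real.sqrt (1 - ρ ^ 2) * ξ))) ∂(gaussianReal 0 1)
        ≤ (1 / (1 - ρ)) * (2 * Ψ 0
            + MΨ * Mi * ((1 - ρ) * |v i| + Real.sqrt (2 * (1 - ρ ^ 2) / π))) := by
  intro x v
  have hρ1 : (0:ℝ) < 1 - ρ := by have := hρ.2; linarith
  have hρ2 : (0:ℝ) ≤ 1 - ρ ^ 2 := by have h1 := hρ.1; have h2 := hρ.2; nlinarith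
  set s := Real.sqrt (1 - ρ ^ 2) with hs
  have hs0 : 0 ≤ s := Real.sqrt_nonneg _
  have hMi0 : 0 ≤ Mi := (abs_nonneg _).trans (hMi x)
  have hMΨ0 : 0 ≤ MΨ := (abs_nonneg _).trans (hMΨ 0)
  have hlip : LipschitzWith ⟨MΨ, hMΨ0⟩ Ψ :=
    lipschitzWith_of_nnnorm_deriv_le hΨdiff fun t => by
      rw [← NNReal.coe_le_coe (r₂ := ⟨MΨ, hMΨ0⟩)]; simp only [coe_nnnorm, Real.norm_eq_abs]; exact hMΨ t
  have hΨle : ∀ t : ℝ, Ψ t ≤ Ψ 0 + MΨ * |t| := by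
    intro t
    have h := hlip.dist_le_mul t 0
    rw [Real.dist_eq, Real.dist_eq, sub_zero] at h
    have h2 : Ψ t - Ψ 0 ≤ MΨ * |t| := (abs_le.mp h).2
    linarith
  set c := pd i U₁ x with hc
  set C1 := Ψ 0 + MΨ * Mi / 2 * ((1 - ρ) * |v i|) with hC1
  set C2 := MΨ * Mi / 2 * s with hC2
  have hpt : ∀ ξ : ℝ, Ψ (c / 2 * (v i - (ρ * v i + s * ξ))) ≤ C1 + C2 * |ξ| := by
    intro ξ
    have habs : |c / 2 * (v i - (ρ * v i + s * ξ))|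
        ≤ Mi / 2 * ((1 - ρ) * |v i| + s * |ξ|) := by
      rw [abs_mul]
      have h1 : |c / 2| ≤ Mi / 2 := by
        rw [abs_div, abs_two]
        have := hMi x; rw [← hc] at this; linarith
      have h2 : |v i - (ρ * v i + s * ξ)| ≤ (1 - ρ) * |v i| + s * |ξ| := by
        rw [show v i - (ρ * v i + s * ξ) = (1 - ρ) * v i - s * ξ by ring]
        calc |(1 - ρ) * v i - s * ξ| ≤ |(1 - ρ) * v i| + |s * ξ| := abs_sub _ _
          _ = (1 - ρ) * |v i| + s * |ξ| := by
              rw [abs_mul, abs_mul, abs_of_pos hρ1, abs_of_nonneg hs0]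
      exact mul_le_mul h1 h2 (abs_nonneg _) (by linarith)
    have hb := hΨle (c / 2 * (v i - (ρ * v i + s * ξ)))
    have h3 := mul_le_mul_of_nonneg_left habs hMΨ0
    have h4 : MΨ * (Mi / 2 * ((1 - ρ) * |v i| + s * |ξ|))
        = MΨ * Mi / 2 * ((1 - ρ) * |v i|) + MΨ * Mi / 2 * s * |ξ| := by ring
    rw [hC1, hC2]; linarith
  have hg_int : Integrable (fun ξ : ℝ => C1 + C2 * |ξ|) (gaussianReal 0 1) :=
    (integrable_const C1).add (gauss_abs_integrable.const_mul C2)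
  have hmono := integral_mono_of_nonneg
      (Filter.Eventually.of_forall fun ξ => hΨpos _) hg_int
      (Filter.Eventually.of_forall fun ξ => hpt ξ)
  have hgval : ∫ ξ, (C1 + C2 * |ξ|) ∂(gaussianReal 0 1)
      = C1 + C2 * Real.sqrt (2 / π) := by
    rw [integral_add (integrable_const C1) (gauss_abs_integrable.const_mul C2),
      integral_const, integral_const_mul, gauss_abs_integral]
    simp
  rw [hgval] at hmono
  have hmul := mul_le_mul_of_nonneg_left hmono
      (le_of_lt (by positivity : (0:ℝ) < 2 / (1 - ρ)))
  refine le_trans hmul (le_of_eq ?_)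
  have hsq : s * Real.sqrt (2 / π) = Real.sqrt (2 * (1 - ρ ^ 2) / π) := by
    rw [hs, ← Real.sqrt_mul hρ2]
    congr 1; ring
  rw [hC1, hC2, ← hsq]
  field_simp
  ring
end
end

section
/- Let γ > 0. There exists δ₀ > 0 (independent of b) such that for every b ∈ (0,1/2) there exist constants C₁, C₂ > 0 with, for all 0 < δ ≤ δ₀ and all v ∈ ℝ^d, E[exp(b|e^{−γδ} v + √(1 − e^{−2γδ}) ξ|²)] ≤ (1 + C₂ δ) exp(b(1 − C₁ δ)|v|²), where ξ is a standard Gaussian vector in ℝ^d. -/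
open MeasureTheory ProbabilityTheory Real

noncomputable section

open scoped ENNReal NNReal

lemma one_step (b s w : ℝ) (hA : 0 < 1 - 2*b*s^2) :
    ∫ x, Real.exp (b * (w + s*x)^2) ∂(gaussianReal 0 1)
      = (Real.sqrt (1 - 2*b*s^2))⁻¹ * Real.exp (b * w^2 / (1 - 2*b*s^2)) := by
  have hα : 0 < 1/2 - b*s^2 := by linarith
  set α : ℝ := 1/2 - b*s^2 with hαdef
  set A : ℝ := 1 - 2*b*s^2 with hAdef
  have hA0 : A ≠ 0 := ne_of_gt hA
  have hα0 : α ≠ 0 := ne_of_gt hα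
  rw [gaussianReal_of_var_ne_zero 0 one_ne_zero]
  have hpdf : gaussianPDF 0 1 = fun x => ((gaussianPDFReal 0 1 x).toNNReal : ℝ≥0∞) := rfl
  rw [hpdf, integral_withDensity_eq_integral_smul
    ((measurable_gaussianPDFReal 0 1).real_toNNReal)]
  have key : ∀ x : ℝ, (Real.toNNReal (gaussianPDFReal 0 1 x)) • Real.exp (b * (w + s*x)^2)
      = (Real.sqrt (2*π))⁻¹ * (Real.exp (b * w^2 / A) * Real.exp (-α * (x - b*w*s/α)^2)) := by
    intro x
    rw [NNReal.smul_def, smul_eq_mul, Real.coe_toNNReal _ (gaussianPDFReal_nonneg 0 1 x)]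
    unfold gaussianPDFReal
    push_cast
    rw [mul_one, mul_assoc, ← Real.exp_add, ← Real.exp_add]
    congr 1
    congr 1
    rw [hαdef, hAdef]
    have hA' : (1 - 2*b*s^2) ≠ 0 := by rw [← hAdef]; exact hA0
    have hα' : (1/2 - b*s^2) ≠ 0 := by rw [← hαdef]; exact hα0
    field_simp
    ring
  simp_rw [key]
  rw [integral_const_mul, integral_const_mul,
    MeasureTheory.integral_sub_right_eq_self (fun x => Real.exp (-α * x^2)) (b*w*s/α),
    integral_gaussian]
  have h2π : (0:ℝ) < 2*π := by positivity
  have hpa : π/α = (2*π)/A := by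
    rw [div_eq_div_iff hα0 hA0, hAdef, hαdef]; ring
  rw [hpa, Real.sqrt_div (le_of_lt h2π)]
  field_simp

lemma pi_gauss_prod (d : ℕ) (f : Fin d → ℝ → ℝ) :
    ∫ x : Fin d → ℝ, ∏ i, f i (x i) ∂(Measure.pi fun _ : Fin d => gaussianReal 0 1)
      = ∏ i, ∫ x, f i x ∂(gaussianReal 0 1) := by
  letI : MeasureSpace ℝ := ⟨gaussianReal 0 1⟩
  haveI : SigmaFinite (volume : Measure ℝ) :=
    (inferInstance : SigmaFinite (gaussianReal 0 1))
  exact MeasureTheory.integral_fintype_prod_eq_prod (ι := Fin d) f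

lemma pow_one_add_le (d : ℕ) (x : ℝ) (h0 : 0 ≤ x) (h1 : x ≤ 1) :
    (1 + x)^d ≤ 1 + ((2:ℝ)^d - 1) * x := by
  induction d with
  | zero => simp
  | succ n ih =>
    have h2 : (1:ℝ) ≤ 2^n := one_le_pow₀ (by norm_num)
    have hx2 : x^2 ≤ x := by nlinarith
    calc (1+x)^(n+1) = (1+x)^n * (1+x) := by ring
      _ ≤ (1 + ((2:ℝ)^n - 1) * x) * (1+x) := by
          apply mul_le_mul_of_nonneg_right ih (by linarith)
      _ = 1 + (2*(2:ℝ)^n - 1) * x + ((2:ℝ)^n - 1) * (x^2 - x) := by ring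
      _ ≤ 1 + ((2:ℝ)^(n+1) - 1) * x := by
          have : ((2:ℝ)^(n+1)) = 2 * 2^n := by ring
          rw [this]; nlinarith

lemma aux_coeff (b t g : ℝ) (hb0 : 0 < b) (hb12 : b < 1/2) (hg : 0 < g)
    (hgs : g ≤ t) (ht1 : 2*b*t ≤ 1) :
    b * (1 - t) ≤ b * (1 - (1-2*b)*g) * (1 - 2*b*t) := by
  have h1 : g*(1-2*b*t) ≤ g := by
    nlinarith [mul_nonneg (mul_nonneg (by linarith : (0:ℝ) ≤ 2*b)
      (le_trans (le_of_lt hg) hgs)) (le_of_lt hg)]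
  have h2 : g*(1-2*b*t) ≤ t := le_trans h1 hgs
  nlinarith [mul_nonneg (mul_nonneg (le_of_lt hb0)
    (by linarith : (0:ℝ) ≤ 1-2*b))
    (by linarith : (0:ℝ) ≤ t - g*(1-2*b*t))]

/-- Lemma on the O-step of the splitting scheme. For `γ > 0` there
exists `δ₀ > 0` (independent of `b`) such that for every `b ∈ (0,1/2)` there are
`C₁, C₂ > 0` with, for all `0 < δ ≤ δ₀` and all `v ∈ ℝ^d`,
`E[exp(b|e^{−γδ}v + √(1−e^{−2γδ})ξ|²)] ≤ (1 + C₂δ) exp(b(1 − C₁δ)|v|²)`. -/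
theorem O_step_lyapunov (d : ℕ) (γ : ℝ) (hγ : 0 < γ) :
    ∃ δ₀ : ℝ, 0 < δ₀ ∧ ∀ b ∈ Set.Ioo (0 : ℝ) (1 / 2),
      ∃ C₁ : ℝ, 0 < C₁ ∧ ∃ C₂ : ℝ, 0 < C₂ ∧
        ∀ δ : ℝ, 0 < δ → δ ≤ δ₀ → ∀ v : Fin d → ℝ,
          ∫ ξ : Fin d → ℝ,
              Real.exp (b * ∑ i, (Real.exp (-γ * δ) * v i
                + Real.sqrt (1 - Real.exp (-2 * γ * δ)) * ξ i) ^ 2)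
              ∂(Measure.pi fun _ : Fin d => gaussianReal 0 1)
            ≤ (1 + C₂ * δ) * Real.exp (b * (1 - C₁ * δ) * ∑ i, v i ^ 2) := by
  refine ⟨1/(4*γ), by positivity, ?_⟩
  rintro b ⟨hb0, hb12⟩
  refine ⟨(1-2*b)*γ, by nlinarith, (2:ℝ)^d * (2*γ) + 1, by positivity, ?_⟩
  intro δ hδ hδ0 v
  set x : ℝ := 2*γ*δ with hxdef
  have hx0 : 0 < x := by positivity
  have hx12 : x ≤ 1/2 := by
    rw [hxdef]
    have : 2*γ*δ ≤ 2*γ*(1/(4*γ)) := by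
      apply mul_le_mul_of_nonneg_left hδ0 (by positivity)
    calc 2*γ*δ ≤ 2*γ*(1/(4*γ)) := this
      _ = 1/2 := by field_simp; ring
  have he : (-2 * γ * δ : ℝ) = -x := by rw [hxdef]; ring
  set s : ℝ := Real.sqrt (1 - Real.exp (-2 * γ * δ)) with hsdef
  have hexp1 : Real.exp (-2*γ*δ) ≤ 1 := by
    rw [Real.exp_le_one_iff]; nlinarith
  have hs2 : s^2 = 1 - Real.exp (-2*γ*δ) := Real.sq_sqrt (by linarith)
  have hs2_le : s^2 ≤ x := by
    rw [hs2, he]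
    have := Real.add_one_le_exp (-x)
    linarith
  have hs2_nonneg : 0 ≤ s^2 := sq_nonneg s
  have hs2_ge : γ*δ ≤ s^2 := by
    rw [hs2, he]
    have h1 : 1 + x ≤ Real.exp x := by have := Real.add_one_le_exp x; linarith
    have hpos : (0:ℝ) < 1 + x := by linarith
    have h2 : Real.exp (-x) ≤ (1+x)⁻¹ := by
      rw [Real.exp_neg]
      exact inv_anti₀ hpos h1
    have hinv : (1+x) * (1+x)⁻¹ = 1 := mul_inv_cancel₀ (ne_of_gt hpos)
    have hnn : (0:ℝ) ≤ (1+x)⁻¹ := by positivity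
    have h3 : (1+x)⁻¹ ≤ 1 - x/2 := by nlinarith
    have hxg : x/2 = γ*δ := by rw [hxdef]; ring
    linarith
  have h2bs : 2*b*s^2 ≤ s^2 := by nlinarith
  set A : ℝ := 1 - 2*b*s^2 with hAdef
  have hA_ge : 1/2 ≤ A := by rw [hAdef]; linarith
  have hA : 0 < A := by linarith
  have hA_le : A ≤ 1 := by rw [hAdef]; nlinarith
  -- prefactor bound
  have hsA : (0:ℝ) < Real.sqrt A := Real.sqrt_pos.mpr hA
  have hsqA : (Real.sqrt A)⁻¹ ≤ 1 + x := by
    have hpos : (0:ℝ) < 1 + x := by linarith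
    have hAx : 1 - x ≤ A := by rw [hAdef]; linarith
    have h1 : 1/(1+x)^2 ≤ A := by
      rw [div_le_iff₀ (by positivity)]
      nlinarith [mul_nonneg (le_of_lt hx0) (le_of_lt hx0),
        mul_le_mul_of_nonneg_right hAx (sq_nonneg (1+x))]
    have h2 : (1+x)⁻¹ ≤ Real.sqrt A := by
      rw [show ((1+x)⁻¹ : ℝ) = Real.sqrt (1/(1+x)^2) by
        rw [one_div, Real.sqrt_inv, Real.sqrt_sq (le_of_lt hpos)]]
      exact Real.sqrt_le_sqrt h1
    calc (Real.sqrt A)⁻¹ ≤ ((1+x)⁻¹)⁻¹ := inv_anti₀ (by positivity) h2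
      _ = 1 + x := inv_inv _
  -- main computation
  have ha2 : Real.exp (-γ*δ)^2 = Real.exp (-2*γ*δ) := by
    rw [sq, ← Real.exp_add]; ring_nf
  have hcalc : (∫ ξ : Fin d → ℝ,
        Real.exp (b * ∑ i, (Real.exp (-γ * δ) * v i + s * ξ i) ^ 2)
        ∂(Measure.pi fun _ : Fin d => gaussianReal 0 1))
      = ((Real.sqrt A)⁻¹)^d
        * Real.exp ((b * Real.exp (-2*γ*δ) / A) * ∑ i, v i ^ 2) := by
    have step1 : ∀ ξ : Fin d → ℝ,
        Real.exp (b * ∑ i, (Real.exp (-γ * δ) * v i + s * ξ i) ^ 2)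
        = ∏ i, Real.exp (b * (Real.exp (-γ * δ) * v i + s * ξ i) ^ 2) := by
      intro ξ
      rw [Finset.mul_sum, Real.exp_sum]
    simp_rw [step1]
    rw [pi_gauss_prod d (fun i y => Real.exp (b * (Real.exp (-γ * δ) * v i + s * y) ^ 2))]
    have step2 : ∀ i : Fin d,
        (∫ y, Real.exp (b * (Real.exp (-γ * δ) * v i + s * y) ^ 2) ∂(gaussianReal 0 1))
        = (Real.sqrt A)⁻¹ * Real.exp (b * (Real.exp (-γ * δ) * v i)^2 / A) :=
      fun i => one_step b s (Real.exp (-γ * δ) * v i) hA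
    simp_rw [step2]
    rw [Finset.prod_mul_distrib, Finset.prod_const, Finset.card_univ, Fintype.card_fin,
      ← Real.exp_sum]
    have hsum : (∑ i : Fin d, b * (Real.exp (-γ*δ) * v i)^2 / A)
        = b * Real.exp (-2*γ*δ) / A * ∑ i, v i^2 := by
      rw [Finset.mul_sum]
      exact Finset.sum_congr rfl fun i _ => by rw [mul_pow, ha2]; ring
    rw [hsum]
  rw [hcalc]
  -- coefficient inequality
  have hcoeff : b * Real.exp (-2*γ*δ) / A ≤ b * (1 - (1-2*b)*γ * δ) := by
    rw [div_le_iff₀ hA]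
    have hexp2 : Real.exp (-2*γ*δ) = 1 - s^2 := by rw [hs2]; ring
    rw [hexp2, hAdef]
    have := aux_coeff b (s^2) (γ*δ) hb0 hb12 (mul_pos hγ hδ) hs2_ge
      (by rw [hAdef] at hA; linarith)
    calc b * (1-s^2) ≤ b * (1 - (1-2*b)*(γ*δ)) * (1-2*b*s^2) := this
      _ = b * (1 - (1-2*b)*γ*δ) * (1-2*b*s^2) := by ring
  have hE : Real.exp ((b * Real.exp (-2*γ*δ) / A) * ∑ i, v i ^ 2)
      ≤ Real.exp (b * (1 - (1-2*b)*γ * δ) * ∑ i, v i ^ 2) := by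
    apply Real.exp_le_exp.mpr
    apply mul_le_mul_of_nonneg_right hcoeff
    exact Finset.sum_nonneg fun i _ => sq_nonneg _
  have hP : ((Real.sqrt A)⁻¹)^d ≤ 1 + ((2:ℝ)^d * (2*γ) + 1) * δ := by
    calc ((Real.sqrt A)⁻¹)^d ≤ (1+x)^d := by
          apply pow_le_pow_left₀ (by positivity) hsqA
      _ ≤ 1 + ((2:ℝ)^d - 1) * x := pow_one_add_le d x (le_of_lt hx0) (by linarith)
      _ ≤ 1 + ((2:ℝ)^d * (2*γ) + 1) * δ := by
          have h2d : (1:ℝ) ≤ 2^d := one_le_pow₀ (by norm_num)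
          rw [hxdef]
          nlinarith
  calc ((Real.sqrt A)⁻¹)^d * Real.exp ((b * Real.exp (-2*γ*δ) / A) * ∑ i, v i ^ 2)
      ≤ (1 + ((2:ℝ)^d * (2*γ) + 1) * δ)
        * Real.exp (b * (1 - (1-2*b)*γ * δ) * ∑ i, v i ^ 2) := by
        apply mul_le_mul hP hE (le_of_lt (Real.exp_pos _)) (by positivity)
    _ = (1 + ((2:ℝ)^d * (2*γ) + 1) * δ)
        * Real.exp (b * (1 - (1-2*b)*γ * δ) * ∑ i, v i ^ 2) := rfl
end
end

section
/- Let ρ ∈ (−1,1), b ∈ (0,1/2), and set α = ρ²/(1 − 2b(1 − ρ²)); note α < 1. Then there exists a constant C > 0 such that for all w ∈ ℝ, E[ exp(b(ρw + √(1−ρ²) ξ)²) (1 + |(1−ρ)w + √(1−ρ²) ξ|) ] ≤ C (1 + |w|) exp(b α w²), where ξ is a standard one-dimensional Gaussian; in particular the expectation is finite and grows strictly slower than exp(b w²) as |w| → ∞. -/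
open MeasureTheory ProbabilityTheory Real

noncomputable section

/-- Let `ρ ∈ (−1,1)`, `b ∈ (0,1/2)` and `α = ρ²/(1 − 2b(1−ρ²))`;
then `α < 1`, and there exists `C > 0` such that for all `w ∈ ℝ`,
`E[exp(b(ρw + √(1−ρ²)ξ)²)(1 + |(1−ρ)w + √(1−ρ²)ξ|)] ≤ C (1 + |w|) exp(b α w²)`
(where `ξ` is a standard Gaussian); in particular the expectation is finite. -/
theorem post_jump_exp_moment (ρ b : ℝ) (hρ : ρ ∈ Set.Ioo (-1 : ℝ) 1)
    (hb : b ∈ Set.Ioo (0 : ℝ) (1 / 2)) :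
    ρ ^ 2 / (1 - 2 * b * (1 - ρ ^ 2)) < 1
      ∧ ∃ C : ℝ, 0 < C ∧ ∀ w : ℝ,
          Integrable (fun ξ : ℝ =>
              Real.exp (b * (ρ * w + Real.sqrt (1 - ρ ^ 2) * ξ) ^ 2)
                * (1 + |(1 - ρ) * w + Real.sqrt (1 - ρ ^ 2) * ξ|)) (gaussianReal 0 1)
          ∧ ∫ ξ : ℝ, Real.exp (b * (ρ * w + Real.sqrt (1 - ρ ^ 2) * ξ) ^ 2)
                * (1 + |(1 - ρ) * w + Real.sqrt (1 - ρ ^ 2) * ξ|) ∂(gaussianReal 0 1)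
              ≤ C * (1 + |w|)
                  * Real.exp (b * (ρ ^ 2 / (1 - 2 * b * (1 - ρ ^ 2))) * w ^ 2) := by
  obtain ⟨hρ1, hρ2⟩ := hρ
  obtain ⟨hb0, hb2⟩ := hb
  have h1ρ : (0:ℝ) < 1 - ρ^2 := by nlinarith
  set s : ℝ := Real.sqrt (1 - ρ^2) with hs_def
  have hs2 : s^2 = 1 - ρ^2 := Real.sq_sqrt h1ρ.le
  have hs0 : 0 ≤ s := Real.sqrt_nonneg _
  set a : ℝ := 1 - 2*b*(1-ρ^2) with ha_def
  have ha : 0 < a := by rw [ha_def]; nlinarith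
  have haz : a ≠ 0 := ha.ne'
  have hα : ρ^2 / a < 1 := by rw [div_lt_one ha, ha_def]; nlinarith
  refine ⟨hα, ?_⟩
  have ha2 : 0 < a/2 := by linarith
  -- the absolute first moment integral
  have hJ₁int : Integrable (fun u : ℝ => |u| * Real.exp (-(a/2)*u^2)) := by
    refine (integrable_mul_exp_neg_mul_sq ha2).abs.congr (ae_of_all _ fun x => ?_)
    simp only [abs_mul, abs_of_pos (Real.exp_pos _)]
  set J₁ : ℝ := ∫ u : ℝ, |u| * Real.exp (-(a/2) * u^2) with hJ₁_def
  have hJ₁0 : 0 ≤ J₁ :=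
    integral_nonneg fun u => mul_nonneg (abs_nonneg _) (Real.exp_pos _).le
  set c : ℝ := (1-ρ) + 2*b*ρ*s^2/a with hc_def
  have hsqrt2π : 0 < Real.sqrt (2*π) := Real.sqrt_pos.mpr (by positivity)
  have hg0 : 0 < Real.sqrt (π/(a/2)) := Real.sqrt_pos.mpr (by positivity)
  set C : ℝ := (Real.sqrt (2*π))⁻¹ * ((1+|c|) * Real.sqrt (π/(a/2)) + s*J₁) with hC_def
  have hC : 0 < C := by
    apply mul_pos (inv_pos.mpr hsqrt2π)
    have : 0 < (1+|c|) * Real.sqrt (π/(a/2)) :=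
      mul_pos (by positivity) hg0
    nlinarith [mul_nonneg hs0 hJ₁0]
  refine ⟨C, hC, fun w => ?_⟩
  set μ : ℝ := 2*b*ρ*w*s/a with hμ_def
  -- pdf formula
  have hpdf : ∀ x : ℝ, gaussianPDFReal 0 1 x = (Real.sqrt (2*π))⁻¹ * Real.exp (-x^2/2) := by
    intro x; simp [gaussianPDFReal]
  have hpdf0 : ∀ x : ℝ, 0 ≤ gaussianPDFReal 0 1 x := gaussianPDFReal_nonneg 0 1
  -- exponent completion of the square
  have hexp : ∀ ξ : ℝ, -ξ^2/2 + b*(ρ*w+s*ξ)^2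
      = b*(ρ^2/a)*w^2 + (-(a/2)*(ξ-μ)^2) := by
    intro ξ
    rw [hμ_def]
    have hinv : a * a⁻¹ = 1 := mul_inv_cancel₀ haz
    linear_combination (ξ^2/2 + b*ρ^2*w^2*a⁻¹) * ha_def + (b*ξ^2 + 2*b^2*ρ^2*w^2*a⁻¹) * hs2
      + (-2*b*ρ*w*s*ξ + 2*b^2*ρ^2*w^2*s^2*a⁻¹ - b*ρ^2*w^2) * hinv
  -- linear part rewriting
  have hlin : ∀ ξ : ℝ, (1-ρ)*w + s*ξ = c*w + s*(ξ-μ) := by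
    intro ξ; rw [hc_def, hμ_def]; field_simp; ring
  clear_value s a J₁ c C μ
  set K : ℝ := (Real.sqrt (2*π))⁻¹ * Real.exp (b*(ρ^2/a)*w^2) with hK_def
  clear_value K
  -- the density-weighted integrand
  have hG : ∀ ξ : ℝ,
      (Real.exp (b * (ρ*w + s*ξ)^2) * (1 + |(1-ρ)*w + s*ξ|)) * gaussianPDFReal 0 1 ξ
        = K * (Real.exp (-(a/2)*(ξ-μ)^2) * (1 + |c*w + s*(ξ-μ)|)) := by
    intro ξ
    rw [hpdf, hlin, hK_def]
    have h2 : Real.exp (-ξ^2/2) * Real.exp (b*(ρ*w+s*ξ)^2)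
        = Real.exp (b*(ρ^2/a)*w^2) * Real.exp (-(a/2)*(ξ-μ)^2) := by
      rw [← Real.exp_add, ← Real.exp_add]
      exact congrArg Real.exp (hexp ξ)
    linear_combination ((Real.sqrt (2*π))⁻¹ * (1 + |c*w + s*(ξ-μ)|)) * h2
  -- integrability of the shifted integrand
  have hHint : Integrable (fun u : ℝ => Real.exp (-(a/2)*u^2) * (1 + |c*w + s*u|)) := by
    have hM : Integrable (fun u : ℝ =>
        (1+|c*w|) * Real.exp (-(a/2)*u^2) + s*(|u| * Real.exp (-(a/2)*u^2))) :=
      ((integrable_exp_neg_mul_sq ha2).const_mul _).add (hJ₁int.const_mul s)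
    refine hM.mono' ?_ (ae_of_all _ fun u => ?_)
    · apply Continuous.aestronglyMeasurable
      fun_prop
    · have he : (0:ℝ) < Real.exp (-(a/2)*u^2) := Real.exp_pos _
      have habs : |c*w + s*u| ≤ |c*w| + s*|u| := by
        calc |c*w + s*u| ≤ |c*w| + |s*u| := abs_add_le _ _
          _ = |c*w| + s*|u| := by rw [abs_mul s u, abs_of_nonneg hs0]
      rw [Real.norm_of_nonneg (mul_nonneg he.le (by positivity))]
      nlinarith [mul_le_mul_of_nonneg_left habs he.le]
  have hHcomp : Integrable (fun ξ : ℝ =>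
      K * (Real.exp (-(a/2)*(ξ-μ)^2) * (1 + |c*w + s*(ξ-μ)|))) :=
    (hHint.comp_sub_right μ).const_mul K
  -- unpack the gaussian measure
  have hmeas_g : gaussianReal 0 1 = volume.withDensity (gaussianPDF 0 1) :=
    gaussianReal_of_var_ne_zero 0 one_ne_zero
  have hIv : (fun ξ : ℝ => (Real.exp (b * (ρ*w + s*ξ)^2) * (1 + |(1-ρ)*w + s*ξ|))
        * (gaussianPDF 0 1 ξ).toReal)
      = fun ξ : ℝ => K * (Real.exp (-(a/2)*(ξ-μ)^2) * (1 + |c*w + s*(ξ-μ)|)) := by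
    funext ξ
    rw [gaussianPDF, ENNReal.toReal_ofReal (hpdf0 ξ), hG ξ]
  have hInt : Integrable (fun ξ : ℝ =>
      Real.exp (b * (ρ*w + s*ξ)^2) * (1 + |(1-ρ)*w + s*ξ|)) (gaussianReal 0 1) := by
    rw [hmeas_g, integrable_withDensity_iff (measurable_gaussianPDF 0 1)
      (ae_of_all _ fun x => ENNReal.ofReal_lt_top)]
    rw [hIv]
    exact hHcomp
  refine ⟨hInt, ?_⟩
  -- compute/bound the integral
  have hswap : ∫ ξ : ℝ, Real.exp (b * (ρ*w + s*ξ)^2) * (1 + |(1-ρ)*w + s*ξ|) ∂(gaussianReal 0 1)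
      = ∫ ξ : ℝ, K * (Real.exp (-(a/2)*(ξ-μ)^2) * (1 + |c*w + s*(ξ-μ)|)) := by
    rw [hmeas_g]
    have hwd : volume.withDensity (gaussianPDF 0 1)
        = volume.withDensity (fun x => ((gaussianPDFReal 0 1 x).toNNReal : ENNReal)) := rfl
    rw [hwd, integral_withDensity_eq_integral_smul
      ((measurable_gaussianPDFReal 0 1).real_toNNReal) _]
    congr 1
    funext ξ
    rw [NNReal.smul_def, smul_eq_mul, Real.coe_toNNReal _ (hpdf0 ξ), mul_comm, hG ξ]
  rw [hswap, integral_const_mul, integral_sub_right_eq_self (μ := volume)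
    (fun u => Real.exp (-(a/2)*u^2) * (1 + |c*w + s*u|)) μ]
  -- bound the remaining integral
  have hbound : ∫ u : ℝ, Real.exp (-(a/2)*u^2) * (1 + |c*w + s*u|)
      ≤ (1+|c*w|) * Real.sqrt (π/(a/2)) + s*J₁ := by
    have hMint : Integrable (fun u : ℝ =>
        (1+|c*w|) * Real.exp (-(a/2)*u^2) + s*(|u| * Real.exp (-(a/2)*u^2))) :=
      ((integrable_exp_neg_mul_sq ha2).const_mul _).add (hJ₁int.const_mul s)
    have h1 : ∫ u : ℝ, Real.exp (-(a/2)*u^2) * (1 + |c*w + s*u|)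
        ≤ ∫ u : ℝ, ((1+|c*w|) * Real.exp (-(a/2)*u^2) + s*(|u| * Real.exp (-(a/2)*u^2))) := by
      refine integral_mono hHint hMint fun u => ?_
      have he : (0:ℝ) < Real.exp (-(a/2)*u^2) := Real.exp_pos _
      have habs : |c*w + s*u| ≤ |c*w| + s*|u| := by
        calc |c*w + s*u| ≤ |c*w| + |s*u| := abs_add_le _ _
          _ = |c*w| + s*|u| := by rw [abs_mul s u, abs_of_nonneg hs0]
      nlinarith [mul_le_mul_of_nonneg_left habs he.le]
    have h2 : ∫ u : ℝ, ((1+|c*w|) * Real.exp (-(a/2)*u^2) + s*(|u| * Real.exp (-(a/2)*u^2)))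
        = (1+|c*w|) * Real.sqrt (π/(a/2)) + s*J₁ := by
      rw [integral_add ((integrable_exp_neg_mul_sq ha2).const_mul _) (hJ₁int.const_mul s),
        integral_const_mul, integral_const_mul, hJ₁_def, integral_gaussian]
    linarith [h1, h2.le]
  have hKpos : 0 < K := by
    rw [hK_def]
    positivity
  have h3 : (1+|c*w|) * Real.sqrt (π/(a/2)) + s*J₁
      ≤ ((1+|c|) * Real.sqrt (π/(a/2)) + s*J₁) * (1+|w|) := by
    rw [abs_mul]
    have e1 : 0 ≤ Real.sqrt (π/(a/2)) * |c| := mul_nonneg hg0.le (abs_nonneg c)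
    have e2 : 0 ≤ Real.sqrt (π/(a/2)) * |w| := mul_nonneg hg0.le (abs_nonneg w)
    have e3 : 0 ≤ s * J₁ * |w| := mul_nonneg (mul_nonneg hs0 hJ₁0) (abs_nonneg w)
    linarith [e1, e2, e3]
  have h4 : 0 < Real.exp (b * (ρ^2/a) * w^2) := Real.exp_pos _
  calc K * ∫ u : ℝ, Real.exp (-(a/2)*u^2) * (1 + |c*w + s*u|)
      ≤ K * ((1+|c*w|) * Real.sqrt (π/(a/2)) + s*J₁) :=
        mul_le_mul_of_nonneg_left hbound hKpos.le
    _ ≤ K * (((1+|c|) * Real.sqrt (π/(a/2)) + s*J₁) * (1+|w|)) :=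
        mul_le_mul_of_nonneg_left h3 hKpos.le
    _ = C * (1 + |w|) * Real.exp (b * (ρ^2/a) * w^2) := by
        rw [hK_def, hC_def]; ring
end
end
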